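/- arXiv:2304.05000 — 2 statements merged into one kernel-verified Lean document; each statement's English description precedes it below -/
import Mathlib

section
/- Let R be a left-symmetric conformal algebra, Q a ℂ[∂]-module, and Ω(R,Q) = (φ, ψ, l, r, ∘_λ) an extending datum in which g_λ(·,·) is trivial. Then Ω(R,Q) is a left-symmetric conformal extending structure of R by Q if and only if (Q, ∘_λ) is a left-symmetric conformal algebra, R is a Q-bimodule via the actions x_λ a = φ(x)_λ a and a_λ x-action ψ, Q is an R-bimodule via (Q, l, r), and for all a, b ∈ R and x, y ∈ Q: (i) (φ(x)_λ a − ψ(x)_λ a)_{λ+μ} b + φ(r(a)_μ x − l(a)_μ x)_{λ+μ} b = φ(x)_λ(a_μ b) − a_μ(φ(x)_λ b) − ψ(r(b)_{−λ−∂}x)_{−μ−∂} a; (ii) ψ(x)_{−λ−μ−∂}(a_λ b − b_μ a) = a_λ(ψ(x)_{−μ−∂} b) − b_μ(ψ(x)_{−λ−∂} a) + ψ(l(b)_μ x)_{−λ−∂} a − ψ(l(a)_λ x)_{−μ−∂} b; (iii) (l(a)_λ x)∘_{λ+μ} y + l(ψ(x)_{−λ−∂} a)_{λ+μ} y − l(a)_λ(x∘_μ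 y) = l(φ(x)_μ a)_{λ+μ} y + (r(a)_{−μ−∂} x)∘_{λ+μ} y − r(ψ(y)_{−λ−∂} a)_{−μ−∂} x − x∘_μ(l(a)_λ y); (iv) r(a)_{−λ−μ−∂}(x∘_λ y − y∘_μ x) = r(φ(y)_μ a)_{−λ−∂} x − r(φ(x)_λ a)_{−μ−∂} y + x∘_λ(r(a)_{−μ−∂} y) − y∘_μ(r(a)_{−λ−∂} x). -/
open Finsupp Polynomial

noncomputable section

/-- One-variable conformal polynomials in λ with coefficients in `W`:
the coefficient of `λ^n` sits at index `n`. -/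
abbrev OP (W : Type*) [Zero W] := ℕ →₀ W

/-- Two-variable conformal polynomials in λ, μ with coefficients in `W`. -/
abbrev TP (W : Type*) [Zero W] := (ℕ × ℕ) →₀ W

section Defs

variable {U V W L : Type*}
variable [AddCommGroup U] [Module ℂ U] [AddCommGroup V] [Module ℂ V]
variable [AddCommGroup W] [Module ℂ W] [AddCommGroup L] [Module ℂ L]

/-- Multiplication by the variable λ on one-variable polynomials. -/
def lsh : OP W →ₗ[ℂ] OP W := Finsupp.lmapDomain W ℂ (· + 1)

/-- Multiplication by λ on two-variable polynomials. -/
def LX : TP W →ₗ[ℂ] TP W := Finsupp.lmapDomain W ℂ (fun p => (p.1 + 1, p.2))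

/-- Multiplication by μ on two-variable polynomials. -/
def LY : TP W →ₗ[ℂ] TP W := Finsupp.lmapDomain W ℂ (fun p => (p.1, p.2 + 1))

/-- Coefficientwise action of ∂ on one-variable polynomials. -/
def pD (dW : W →ₗ[ℂ] W) : OP W →ₗ[ℂ] OP W := Finsupp.mapRange.linearMap dW

/-- Coefficientwise action of ∂ on two-variable polynomials. -/
def PD (dW : W →ₗ[ℂ] W) : TP W →ₗ[ℂ] TP W := Finsupp.mapRange.linearMap dW

/-- The operator −λ−∂ on one-variable polynomials. -/
def nD (dW : W →ₗ[ℂ] W) : OP W →ₗ[ℂ] OP W := -lsh - pD dW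

/-- The operator −λ−∂ on two-variable polynomials. -/
def nX (dW : W →ₗ[ℂ] W) : TP W →ₗ[ℂ] TP W := -LX - PD dW

/-- The operator −μ−∂ on two-variable polynomials. -/
def nY (dW : W →ₗ[ℂ] W) : TP W →ₗ[ℂ] TP W := -LY - PD dW

/-- The operator −λ−μ−∂ on two-variable polynomials. -/
def nXY (dW : W →ₗ[ℂ] W) : TP W →ₗ[ℂ] TP W := -LX - LY - PD dW

/-- Substitution of a (commuting) operator `A` for the variable of a one-variable
polynomial, with values in two-variable polynomials. -/
def evA (A : TP W →ₗ[ℂ] TP W) : OP W →ₗ[ℂ] TP W :=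
  Finsupp.lsum ℂ (fun k => (A ^ k) ∘ₗ Finsupp.lsingle ((0, 0) : ℕ × ℕ))

/-- Substitution of an operator `A` for the variable of a one-variable polynomial. -/
def evA1 (A : OP W →ₗ[ℂ] OP W) : OP W →ₗ[ℂ] OP W :=
  Finsupp.lsum ℂ (fun k => (A ^ k) ∘ₗ Finsupp.lsingle (0 : ℕ))

/-- `u_A v`: the pairing `m` evaluated with the variable replaced by the operator `A`. -/
def ev2 (m : U →ₗ[ℂ] V →ₗ[ℂ] OP W) (A : TP W →ₗ[ℂ] TP W) (u : U) (v : V) : TP W :=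
  evA A (m u v)

/-- Extension of the pairing `m`, in its first argument, to two-variable polynomials. -/
def exL (m : U →ₗ[ℂ] V →ₗ[ℂ] OP W) (A : TP W →ₗ[ℂ] TP W) (p : TP U) (v : V) : TP W :=
  Finsupp.sum p fun ij u => (LX ^ ij.1) ((LY ^ ij.2) (evA A (m u v)))

/-- Extension of the pairing `m`, in its second argument, to two-variable polynomials. -/
def exR (m : U →ₗ[ℂ] V →ₗ[ℂ] OP W) (A : TP W →ₗ[ℂ] TP W) (u : U) (p : TP V) : TP W :=
  Finsupp.sum p fun ij v => (LX ^ ij.1) ((LY ^ ij.2) (evA A (m u v)))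

/-- Extension of a unary conformal-linear map to two-variable polynomials. -/
def exU (D : U →ₗ[ℂ] OP W) (A : TP W →ₗ[ℂ] TP W) (p : TP U) : TP W :=
  Finsupp.sum p fun ij u => (LX ^ ij.1) ((LY ^ ij.2) (evA A (D u)))

/-- Coefficientwise application of a linear map to a one-variable polynomial. -/
def pMap (f : U →ₗ[ℂ] W) : OP U →ₗ[ℂ] OP W := Finsupp.mapRange.linearMap f

/-- A conformal bilinear map: `f(∂u, v) = −λ f(u,v)` and `f(u, ∂v) = (λ+∂) f(u,v)`. -/
structure ConfBilin (dU : U →ₗ[ℂ] U) (dV : V →ₗ[ℂ] V) (dW : W →ₗ[ℂ] W)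
    (m : U →ₗ[ℂ] V →ₗ[ℂ] OP W) : Prop where
  dleft : ∀ u v, m (dU u) v = -lsh (m u v)
  dright : ∀ u v, m u (dV v) = lsh (m u v) + pD dW (m u v)

/-- A left-symmetric conformal algebra structure on the ℂ[∂]-module `(L, dL)`. -/
structure IsLSCA (dL : L →ₗ[ℂ] L) (m : L →ₗ[ℂ] L →ₗ[ℂ] OP L) : Prop where
  conf : ConfBilin dL dL dL m
  lsym : ∀ a b c : L,
    exL m (LX + LY) (ev2 m LX a b) c - exR m LX a (ev2 m LY b c)
      = exL m (LX + LY) (ev2 m LY b a) c - exR m LY b (ev2 m LX a c)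

/-- The commutator λ-bracket `[u_λ v] = u_λ v − v_{−λ−∂} u`. -/
def commut (dL : L →ₗ[ℂ] L) (m : L →ₗ[ℂ] L →ₗ[ℂ] OP L) : L →ₗ[ℂ] L →ₗ[ℂ] OP L :=
  m - (m.compr₂ (evA1 (nD dL))).flip

/-- A Lie conformal algebra structure on the ℂ[∂]-module `(L, dL)`. -/
structure IsLieCA (dL : L →ₗ[ℂ] L) (br : L →ₗ[ℂ] L →ₗ[ℂ] OP L) : Prop where
  dleft : ∀ u v, br (dL u) v = -lsh (br u v)
  dright : ∀ u v, br u (dL v) = lsh (br u v) + pD dL (br u v)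
  skew : ∀ u v, br u v = -evA1 (nD dL) (br v u)
  jacobi : ∀ a b c : L,
    exR br LX a (ev2 br LY b c)
      = exL br (LX + LY) (ev2 br LX a b) c + exR br LY b (ev2 br LX a c)

end Defs

section Ext

variable {R Q : Type*} [AddCommGroup R] [Module ℂ R] [AddCommGroup Q] [Module ℂ Q]

/-- An extending datum of a left-symmetric conformal algebra `R` by a ℂ[∂]-module `Q`. -/
structure ExtDatum (dR : R →ₗ[ℂ] R) (dQ : Q →ₗ[ℂ] Q) where
  phi : Q →ₗ[ℂ] R →ₗ[ℂ] OP R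
  psi : Q →ₗ[ℂ] R →ₗ[ℂ] OP R
  l : R →ₗ[ℂ] Q →ₗ[ℂ] OP Q
  r : R →ₗ[ℂ] Q →ₗ[ℂ] OP Q
  g : Q →ₗ[ℂ] Q →ₗ[ℂ] OP R
  o : Q →ₗ[ℂ] Q →ₗ[ℂ] OP Q
  hphi : ConfBilin dQ dR dR phi
  hpsi : ConfBilin dQ dR dR psi
  hl : ConfBilin dR dQ dQ l
  hr : ConfBilin dR dQ dQ r
  hg : ConfBilin dQ dQ dR g
  ho : ConfBilin dQ dQ dQ o

/-- Embedding of `R`-valued polynomials into `(R ⊕ Q)`-valued polynomials. -/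
def inlP (R Q : Type*) [AddCommGroup R] [Module ℂ R] [AddCommGroup Q] [Module ℂ Q] :
    OP R →ₗ[ℂ] OP (R × Q) := Finsupp.mapRange.linearMap (LinearMap.inl ℂ R Q)

/-- Embedding of `Q`-valued polynomials into `(R ⊕ Q)`-valued polynomials. -/
def inrP (R Q : Type*) [AddCommGroup R] [Module ℂ R] [AddCommGroup Q] [Module ℂ Q] :
    OP Q →ₗ[ℂ] OP (R × Q) := Finsupp.mapRange.linearMap (LinearMap.inr ℂ R Q)

/-- The λ-product of the unified product `R ♮ Q`:
`(a+x) _λ (b+y) = (a_λ b + φ(x)_λ b + ψ(y)_{−λ−∂} a + g_λ(x,y)) + (x∘_λ y + l(a)_λ y + r(b)_{−λ−∂} x)`. -/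
def uprod (dR : R →ₗ[ℂ] R) (dQ : Q →ₗ[ℂ] Q) (Ω : ExtDatum dR dQ)
    (m : R →ₗ[ℂ] R →ₗ[ℂ] OP R) :
    (R × Q) →ₗ[ℂ] (R × Q) →ₗ[ℂ] OP (R × Q) :=
  ((m.compl₁₂ (LinearMap.fst ℂ R Q) (LinearMap.fst ℂ R Q)).compr₂ (inlP R Q))
    + ((Ω.phi.compl₁₂ (LinearMap.snd ℂ R Q) (LinearMap.fst ℂ R Q)).compr₂ (inlP R Q))
    + (((Ω.psi.compl₁₂ (LinearMap.snd ℂ R Q) (LinearMap.fst ℂ R Q)).compr₂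
        (inlP R Q ∘ₗ evA1 (nD dR))).flip)
    + ((Ω.g.compl₁₂ (LinearMap.snd ℂ R Q) (LinearMap.snd ℂ R Q)).compr₂ (inlP R Q))
    + ((Ω.o.compl₁₂ (LinearMap.snd ℂ R Q) (LinearMap.snd ℂ R Q)).compr₂ (inrP R Q))
    + ((Ω.l.compl₁₂ (LinearMap.fst ℂ R Q) (LinearMap.snd ℂ R Q)).compr₂ (inrP R Q))
    + (((Ω.r.compl₁₂ (LinearMap.fst ℂ R Q) (LinearMap.snd ℂ R Q)).compr₂
        (inrP R Q ∘ₗ evA1 (nD dQ))).flip)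

lemma uprod_apply (dR : R →ₗ[ℂ] R) (dQ : Q →ₗ[ℂ] Q) (Ω : ExtDatum dR dQ)
    (m : R →ₗ[ℂ] R →ₗ[ℂ] OP R) (e₁ e₂ : R × Q) :
    uprod dR dQ Ω m e₁ e₂ =
      inlP R Q (m e₁.1 e₂.1 + Ω.phi e₁.2 e₂.1 + evA1 (nD dR) (Ω.psi e₂.2 e₁.1) + Ω.g e₁.2 e₂.2)
      + inrP R Q (Ω.o e₁.2 e₂.2 + Ω.l e₁.1 e₂.2 + evA1 (nD dQ) (Ω.r e₂.1 e₁.2)) := by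
  simp [uprod, LinearMap.add_apply, LinearMap.compr₂_apply, LinearMap.compl₁₂_apply,
    LinearMap.flip_apply, map_add, LinearMap.comp_apply]
  abel

lemma uprod_res (dR : R →ₗ[ℂ] R) (dQ : Q →ₗ[ℂ] Q) (Ω : ExtDatum dR dQ)
    (m : R →ₗ[ℂ] R →ₗ[ℂ] OP R) (a b : R) :
    uprod dR dQ Ω m (a, (0 : Q)) (b, 0) = inlP R Q (m a b) := by
  rw [uprod_apply]
  simp

/-- Isomorphism property of left-symmetric conformal algebra structures, via
a ℂ[∂]-module automorphism `T` of the underlying module `E`. -/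
structure IsIsoLSCA {E : Type*} [AddCommGroup E] [Module ℂ E] (dE : E →ₗ[ℂ] E)
    (m₁ m₂ : E →ₗ[ℂ] E →ₗ[ℂ] OP E) (T : E ≃ₗ[ℂ] E) : Prop where
  dcomm : ∀ e, T (dE e) = dE (T e)
  mult : ∀ u v, m₂ (T u) (T v) = pMap (T : E →ₗ[ℂ] E) (m₁ u v)

/-- `T` stabilizes `R`, i.e. `T ∘ i = i` for the inclusion `i : R → R ⊕ Q`. -/
def Stab (T : (R × Q) ≃ₗ[ℂ] (R × Q)) : Prop := ∀ a : R, T (a, 0) = (a, 0)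

/-- `T` co-stabilizes `Q`, i.e. `π ∘ T = π` for the projection `π : R ⊕ Q → Q`. -/
def Costab (T : (R × Q) ≃ₗ[ℂ] (R × Q)) : Prop := ∀ e, (T e).2 = e.2

end Ext

/-- `(V, l, r)` is a bimodule over the left-symmetric conformal algebra `(S, mS)`. -/
structure IsBimodule {S V : Type*} [AddCommGroup S] [Module ℂ S] [AddCommGroup V] [Module ℂ V]
    (dV : V →ₗ[ℂ] V) (mS : S →ₗ[ℂ] S →ₗ[ℂ] OP S)
    (l r : S →ₗ[ℂ] V →ₗ[ℂ] OP V) : Prop where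
  bm1 : ∀ (a b : S) (v : V),
    exL l (LX + LY) (ev2 mS LX a b) v - exR l LX a (ev2 l LY b v)
      = exL l (LX + LY) (ev2 mS LY b a) v - exR l LY b (ev2 l LX a v)
  bm2 : ∀ (a b : S) (v : V),
    exR r (nXY dV) b (ev2 l LX a v) - exR l LX a (ev2 r (nY dV) b v)
      = exR r (nXY dV) b (ev2 r (nY dV) a v) - exL r (nY dV) (ev2 mS LX a b) v

namespace BP

lemma nD_def {W : Type*} [AddCommGroup W] [Module ℂ W] (d : W →ₗ[ℂ] W) (r : OP W) :
    nD d r = -lsh r - pD d r := rfl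
lemma nX_def {W : Type*} [AddCommGroup W] [Module ℂ W] (d : W →ₗ[ℂ] W) (r : TP W) :
    nX d r = -(LX r) - PD d r := rfl
lemma nY_def {W : Type*} [AddCommGroup W] [Module ℂ W] (d : W →ₗ[ℂ] W) (r : TP W) :
    nY d r = -(LY r) - PD d r := rfl
lemma nXY_def {W : Type*} [AddCommGroup W] [Module ℂ W] (d : W →ₗ[ℂ] W) (r : TP W) :
    nXY d r = -(LX r) - LY r - PD d r := rfl


section Generic

variable {U V W W' : Type*}
variable [AddCommGroup U] [Module ℂ U] [AddCommGroup V] [Module ℂ V]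
variable [AddCommGroup W] [Module ℂ W] [AddCommGroup W'] [Module ℂ W']

@[simp] lemma lsh_single (k : ℕ) (w : W) : lsh (single k w) = single (k+1) w := by
  simp [lsh, lmapDomain]

@[simp] lemma pD_single (d : W →ₗ[ℂ] W) (k : ℕ) (w : W) : pD d (single k w) = single k (d w) := by
  simp [pD]

@[simp] lemma LX_single (p : ℕ×ℕ) (w : W) : LX (single p w) = single (p.1+1, p.2) w := by
  simp [LX, lmapDomain]

@[simp] lemma LY_single (p : ℕ×ℕ) (w : W) : LY (single p w) = single (p.1, p.2+1) w := by
  simp [LY, lmapDomain]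

@[simp] lemma PD_single (d : W →ₗ[ℂ] W) (p : ℕ×ℕ) (w : W) : PD d (single p w) = single p (d w) := by
  simp [PD]

@[simp] lemma evA_single (A : TP W →ₗ[ℂ] TP W) (k : ℕ) (w : W) :
    evA A (single k w) = (A^k) (single ((0:ℕ),(0:ℕ)) w) := by
  simp [evA]

@[simp] lemma evA1_single (A : OP W →ₗ[ℂ] OP W) (k : ℕ) (w : W) :
    evA1 A (single k w) = (A^k) (single (0:ℕ) w) := by
  simp [evA1]

/-- commuting an operator through a power. -/
lemma powc {α β : Type*} [AddCommGroup α] [Module ℂ α] [AddCommGroup β] [Module ℂ β]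
    (A : β →ₗ[ℂ] β) (B : α →ₗ[ℂ] α) (T : α →ₗ[ℂ] β) (h : ∀ x, A (T x) = T (B x)) :
    ∀ (k : ℕ) (x : α), (A^k) (T x) = T ((B^k) x) := by
  intro k
  induction k with
  | zero => simp
  | succ n ih =>
    intro x
    rw [pow_succ, pow_succ, Module.End.mul_apply, Module.End.mul_apply, h, ih]

def XT (F : U →ₗ[ℂ] TP W) : TP U →ₗ[ℂ] TP W :=
  Finsupp.lsum ℂ fun ij => (LX ^ ij.1) ∘ₗ (LY ^ ij.2) ∘ₗ F

@[simp] lemma XT_single (F : U →ₗ[ℂ] TP W) (p : ℕ×ℕ) (u : U) :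
    XT F (single p u) = (LX^p.1) ((LY^p.2) (F u)) := by
  simp [XT]

lemma exL_def (n : U →ₗ[ℂ] V →ₗ[ℂ] OP W) (A : TP W →ₗ[ℂ] TP W) (p : TP U) (v : V) :
    exL n A p v = XT (evA A ∘ₗ n.flip v) p := by
  simp [exL, XT, Finsupp.lsum_apply, Finsupp.sum]

lemma exR_def (n : U →ₗ[ℂ] V →ₗ[ℂ] OP W) (A : TP W →ₗ[ℂ] TP W) (u : U) (p : TP V) :
    exR n A u p = XT (evA A ∘ₗ n u) p := by
  simp [exR, XT, Finsupp.lsum_apply, Finsupp.sum]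

lemma ev2_def (n : U →ₗ[ℂ] V →ₗ[ℂ] OP W) (A : TP W →ₗ[ℂ] TP W) (u : U) (v : V) :
    ev2 n A u v = evA A (n u v) := rfl

lemma exL_single (n : U →ₗ[ℂ] V →ₗ[ℂ] OP W) (A : TP W →ₗ[ℂ] TP W) (p : ℕ×ℕ) (u : U) (v : V) :
    exL n A (single p u) v = (LX^p.1) ((LY^p.2) (evA A (n u v))) := by
  rw [exL_def, XT_single]; rfl

lemma exR_single (n : U →ₗ[ℂ] V →ₗ[ℂ] OP W) (A : TP W →ₗ[ℂ] TP W) (u : U) (p : ℕ×ℕ) (v : V) :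
    exR n A u (single p v) = (LX^p.1) ((LY^p.2) (evA A (n u v))) := by
  rw [exR_def, XT_single]; rfl

lemma XT_addF (F G : U →ₗ[ℂ] TP W) (p : TP U) : XT (F+G) p = XT F p + XT G p := by
  induction p using Finsupp.induction_linear with
  | zero => simp
  | add a b ha hb => simp only [map_add, ha, hb]; abel
  | single k u => simp only [XT_single, LinearMap.add_apply, map_add]

-- additivity / sub lemmas for the pieces of the left-symmetry identity
lemma ev2_addl (n : U →ₗ[ℂ] V →ₗ[ℂ] OP W) (A) (u u' : U) (v : V) :
    ev2 n A (u+u') v = ev2 n A u v + ev2 n A u' v := by simp [ev2, map_add]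

lemma ev2_addr (n : U →ₗ[ℂ] V →ₗ[ℂ] OP W) (A) (u : U) (v v' : V) :
    ev2 n A u (v+v') = ev2 n A u v + ev2 n A u v' := by simp [ev2, map_add]

lemma exL_addp (n : U →ₗ[ℂ] V →ₗ[ℂ] OP W) (A) (p p' : TP U) (v : V) :
    exL n A (p+p') v = exL n A p v + exL n A p' v := by
  rw [exL_def, exL_def, exL_def, map_add]

lemma exL_subp (n : U →ₗ[ℂ] V →ₗ[ℂ] OP W) (A) (p p' : TP U) (v : V) :
    exL n A (p-p') v = exL n A p v - exL n A p' v := by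
  rw [exL_def, exL_def, exL_def, map_sub]

lemma exL_addv (n : U →ₗ[ℂ] V →ₗ[ℂ] OP W) (A) (p : TP U) (v v' : V) :
    exL n A p (v+v') = exL n A p v + exL n A p v' := by
  rw [exL_def, exL_def, exL_def, ← XT_addF]
  have h : evA A ∘ₗ n.flip (v+v') = evA A ∘ₗ n.flip v + evA A ∘ₗ n.flip v' := by
    apply LinearMap.ext; intro u; simp [map_add]
  rw [h]

lemma exR_addu (n : U →ₗ[ℂ] V →ₗ[ℂ] OP W) (A) (u u' : U) (p : TP V) :
    exR n A (u+u') p = exR n A u p + exR n A u' p := by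
  rw [exR_def, exR_def, exR_def, ← XT_addF]
  have h : evA A ∘ₗ n (u+u') = evA A ∘ₗ n u + evA A ∘ₗ n u' := by
    apply LinearMap.ext; intro v; simp [map_add]
  rw [h]

lemma exR_addp (n : U →ₗ[ℂ] V →ₗ[ℂ] OP W) (A) (u : U) (p p' : TP V) :
    exR n A u (p+p') = exR n A u p + exR n A u p' := by
  rw [exR_def, exR_def, exR_def, map_add]

lemma exR_subp (n : U →ₗ[ℂ] V →ₗ[ℂ] OP W) (A) (u : U) (p p' : TP V) :
    exR n A u (p-p') = exR n A u p - exR n A u p' := by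
  rw [exR_def, exR_def, exR_def, map_sub]

-- basic commutation lemmas
lemma LX_LY (q : TP W) : LX (LY q) = LY (LX q) := by
  induction q using Finsupp.induction_linear with
  | zero => simp
  | add a b ha hb => simp [map_add, ha, hb]
  | single p w => simp

lemma LX_PD (d : W →ₗ[ℂ] W) (q : TP W) : LX (PD d q) = PD d (LX q) := by
  induction q using Finsupp.induction_linear with
  | zero => simp
  | add a b ha hb => simp [map_add, ha, hb]
  | single p w => simp

lemma LY_PD (d : W →ₗ[ℂ] W) (q : TP W) : LY (PD d q) = PD d (LY q) := by
  induction q using Finsupp.induction_linear with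
  | zero => simp
  | add a b ha hb => simp [map_add, ha, hb]
  | single p w => simp

lemma lsh_pD (d : W →ₗ[ℂ] W) (q : OP W) : lsh (pD d q) = pD d (lsh q) := by
  induction q using Finsupp.induction_linear with
  | zero => simp
  | add a b ha hb => simp [map_add, ha, hb]
  | single p w => simp

lemma LXpow_LY (i : ℕ) (q : TP W) : (LX^i) (LY q) = LY ((LX^i) q) :=
  powc LX LX LY LX_LY i q

lemma LYpow_LX (j : ℕ) (q : TP W) : (LY^j) (LX q) = LX ((LY^j) q) :=
  powc LY LY LX (fun q => (LX_LY q).symm) j q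

lemma LXpow_LX (i : ℕ) (q : TP W) : (LX^i) (LX q) = LX ((LX^i) q) :=
  powc LX LX LX (fun _ => rfl) i q

lemma LYpow_LY (i : ℕ) (q : TP W) : (LY^i) (LY q) = LY ((LY^i) q) :=
  powc LY LY LY (fun _ => rfl) i q

lemma LYpow_LXpow (i j : ℕ) (q : TP W) : (LY^i) ((LX^j) q) = (LX^j) ((LY^i) q) :=
  powc LY LY (LX^j) (fun x => (LXpow_LY j x).symm) i q

lemma XT_LX (F : U →ₗ[ℂ] TP W) (P : TP U) : XT F (LX P) = LX (XT F P) := by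
  induction P using Finsupp.induction_linear with
  | zero => simp
  | add a b ha hb => simp [map_add, ha, hb]
  | single p u =>
    simp only [LX_single, XT_single]
    rw [pow_succ', Module.End.mul_apply]

lemma XT_LY (F : U →ₗ[ℂ] TP W) (P : TP U) : XT F (LY P) = LY (XT F P) := by
  induction P using Finsupp.induction_linear with
  | zero => simp
  | add a b ha hb => simp [map_add, ha, hb]
  | single p u =>
    simp only [LY_single, XT_single]
    rw [pow_succ', Module.End.mul_apply, LXpow_LY]

-- evA facts
lemma evA_lsh (A : TP W →ₗ[ℂ] TP W) (q : OP W) : evA A (lsh q) = A (evA A q) := by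
  induction q using Finsupp.induction_linear with
  | zero => simp
  | add a b ha hb => simp [map_add, ha, hb]
  | single k w =>
    simp only [lsh_single, evA_single, evA1_single]
    rw [pow_succ', Module.End.mul_apply]

lemma evA_pD (A : TP W →ₗ[ℂ] TP W) (d : W →ₗ[ℂ] W) (hc : ∀ q, A (PD d q) = PD d (A q))
    (q : OP W) : evA A (pD d q) = PD d (evA A q) := by
  induction q using Finsupp.induction_linear with
  | zero => simp
  | add a b ha hb => simp [map_add, ha, hb]
  | single k w =>
    have h1 : (single ((0:ℕ),(0:ℕ)) (d w) : TP W) = PD d (single (0,0) w) := by simp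
    rw [pD_single, evA_single, evA_single, h1]
    exact powc A A (PD d) hc k _

lemma evA_nD (A A' : TP W →ₗ[ℂ] TP W) (d : W →ₗ[ℂ] W)
    (hc : ∀ q, A (PD d q) = PD d (A q))
    (hA' : ∀ q, A' q = -(A q) - PD d q) (q : OP W) :
    evA A (nD d q) = A' (evA A q) := by
  have : nD d q = -lsh q - pD d q := rfl
  rw [this, map_sub, map_neg, evA_lsh, evA_pD A d hc, hA']

lemma evA_evA1 (A : TP W →ₗ[ℂ] TP W) (B : OP W →ₗ[ℂ] OP W) (C : TP W →ₗ[ℂ] TP W)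
    (h : ∀ q, evA A (B q) = C (evA A q)) (p : OP W) :
    evA A (evA1 B p) = evA C p := by
  induction p using Finsupp.induction_linear with
  | zero => simp
  | add a b ha hb => simp [map_add, ha, hb]
  | single k w =>
    have h2 : evA A ((B^k) (single 0 w)) = (C^k) (evA A (single 0 w)) :=
      (powc C B (evA A) (fun x => (h x).symm) k _).symm
    simp only [evA1_single, evA_single, h2, pow_zero, Module.End.one_apply]

-- evA1 facts
lemma evA1_lsh (B : OP W →ₗ[ℂ] OP W) (p : OP W) : evA1 B (lsh p) = B (evA1 B p) := by
  induction p using Finsupp.induction_linear with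
  | zero => simp
  | add a b ha hb => simp [map_add, ha, hb]
  | single k w =>
    simp only [lsh_single, evA_single, evA1_single]
    rw [pow_succ', Module.End.mul_apply]

lemma evA1_pD (B : OP W →ₗ[ℂ] OP W) (d : W →ₗ[ℂ] W) (hc : ∀ q, B (pD d q) = pD d (B q))
    (p : OP W) : evA1 B (pD d p) = pD d (evA1 B p) := by
  induction p using Finsupp.induction_linear with
  | zero => simp
  | add a b ha hb => simp [map_add, ha, hb]
  | single k w =>
    have h1 : (single (0:ℕ) (d w) : OP W) = pD d (single 0 w) := by simp
    rw [pD_single, evA1_single, evA1_single, h1]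
    exact powc B B (pD d) hc k _

lemma nD_pD (d : W →ₗ[ℂ] W) (q : OP W) : nD d (pD d q) = pD d (nD d q) := by
  have h1 : ∀ r : OP W, nD d r = -lsh r - pD d r := fun _ => rfl
  rw [h1, h1, lsh_pD, map_sub, map_neg]

lemma evA1_nD_dright (d : W →ₗ[ℂ] W) (p : OP W) :
    evA1 (nD d) (lsh p + pD d p) = -lsh (evA1 (nD d) p) := by
  rw [map_add, evA1_lsh, evA1_pD _ _ (nD_pD d)]
  have h1 : nD d (evA1 (nD d) p) = -lsh (evA1 (nD d) p) - pD d (evA1 (nD d) p) := rfl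
  rw [h1]; abel

lemma evA1_nD_dleft (d : W →ₗ[ℂ] W) (p : OP W) :
    evA1 (nD d) (-lsh p) = lsh (evA1 (nD d) p) + pD d (evA1 (nD d) p) := by
  rw [map_neg, evA1_lsh]
  have h1 : nD d (evA1 (nD d) p) = -lsh (evA1 (nD d) p) - pD d (evA1 (nD d) p) := rfl
  rw [h1]; abel

-- transport along evA
lemma XT_trans (Φ : TP U →ₗ[ℂ] TP W) (B B' : TP U →ₗ[ℂ] TP U) (C : TP W →ₗ[ℂ] TP W)
    (h : ∀ P, Φ (B P) = C (Φ P)) (h' : ∀ P, Φ (B' P) = C (Φ P)) (p : OP U) :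
    Φ (evA B p) = Φ (evA B' p) := by
  induction p using Finsupp.induction_linear with
  | zero => simp
  | add a b ha hb => simp [map_add, ha, hb]
  | single k w =>
    simp only [evA_single]
    rw [(powc C B Φ (fun x => (h x).symm) k _).symm,
        (powc C B' Φ (fun x => (h' x).symm) k _).symm]

lemma XT_F_PD (n : U →ₗ[ℂ] V →ₗ[ℂ] OP W) (dU : U →ₗ[ℂ] U) (v : V)
    (hd : ∀ u, n (dU u) v = -lsh (n u v)) (P : TP U) :
    XT (evA (LX+LY) ∘ₗ n.flip v) (PD dU P) = -((LX+LY : TP W →ₗ[ℂ] TP W) (XT (evA (LX+LY) ∘ₗ n.flip v) P)) := by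
  induction P using Finsupp.induction_linear with
  | zero => simp
  | add a b ha hb => simp only [map_add, ha, hb]; abel
  | single p u =>
    simp only [PD_single, XT_single, LinearMap.comp_apply, LinearMap.flip_apply]
    rw [hd u, map_neg, evA_lsh]
    simp only [LinearMap.add_apply, map_add, map_neg, LXpow_LX, LXpow_LY, LYpow_LX, LYpow_LY]
    try abel

lemma convX (n : U →ₗ[ℂ] V →ₗ[ℂ] OP W) (dU : U →ₗ[ℂ] U)
    (hd : ∀ u v, n (dU u) v = -lsh (n u v)) (p : OP U) (v : V) :
    exL n (LX+LY) (evA (nY dU) p) v = exL n (LX+LY) (evA LX p) v := by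
  rw [exL_def, exL_def]
  refine XT_trans _ _ _ LX ?_ ?_ p
  · intro P
    have h1 : nY dU P = -(LY P) - PD dU P := rfl
    rw [h1, map_sub, map_neg, XT_LY, XT_F_PD n dU v (fun u => hd u v)]
    simp only [LinearMap.add_apply]
    abel
  · intro P; exact XT_LX _ _

lemma convY (n : U →ₗ[ℂ] V →ₗ[ℂ] OP W) (dU : U →ₗ[ℂ] U)
    (hd : ∀ u v, n (dU u) v = -lsh (n u v)) (p : OP U) (v : V) :
    exL n (LX+LY) (evA (nX dU) p) v = exL n (LX+LY) (evA LY p) v := by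
  rw [exL_def, exL_def]
  refine XT_trans _ _ _ LY ?_ ?_ p
  · intro P
    have h1 : nX dU P = -(LX P) - PD dU P := rfl
    rw [h1, map_sub, map_neg, XT_LX, XT_F_PD n dU v (fun u => hd u v)]
    simp only [LinearMap.add_apply]
    abel
  · intro P; exact XT_LY _ _

end Generic

section Swap

variable {U V W : Type*}
variable [AddCommGroup U] [Module ℂ U] [AddCommGroup V] [Module ℂ V]
variable [AddCommGroup W] [Module ℂ W]

def sw : TP W →ₗ[ℂ] TP W := Finsupp.lmapDomain W ℂ Prod.swap

@[simp] lemma sw_single (p : ℕ×ℕ) (w : W) : sw (single p w) = single p.swap w := by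
  simp [sw, lmapDomain]

lemma sw_sw (P : TP W) : sw (sw P) = P := by
  induction P using Finsupp.induction_linear with
  | zero => simp
  | add a b ha hb => simp [map_add, ha, hb]
  | single p w => simp

lemma sw_LX (q : TP W) : sw (LX q) = LY (sw q) := by
  induction q using Finsupp.induction_linear with
  | zero => simp
  | add a b ha hb => simp [map_add, ha, hb]
  | single p w => simp [Prod.swap]

lemma sw_LY (q : TP W) : sw (LY q) = LX (sw q) := by
  induction q using Finsupp.induction_linear with
  | zero => simp
  | add a b ha hb => simp [map_add, ha, hb]
  | single p w => simp [Prod.swap]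

lemma sw_PD (d : W →ₗ[ℂ] W) (q : TP W) : sw (PD d q) = PD d (sw q) := by
  induction q using Finsupp.induction_linear with
  | zero => simp
  | add a b ha hb => simp [map_add, ha, hb]
  | single p w => simp

lemma sw_nX (d : W →ₗ[ℂ] W) (q : TP W) : sw (nX d q) = nY d (sw q) := by
  have h1 : nX d q = -(LX q) - PD d q := rfl
  have h2 : nY d (sw q) = -(LY (sw q)) - PD d (sw q) := rfl
  rw [h1, h2, map_sub, map_neg, sw_LX, sw_PD]

lemma sw_nY (d : W →ₗ[ℂ] W) (q : TP W) : sw (nY d q) = nX d (sw q) := by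
  have h1 : nY d q = -(LY q) - PD d q := rfl
  have h2 : nX d (sw q) = -(LX (sw q)) - PD d (sw q) := rfl
  rw [h1, h2, map_sub, map_neg, sw_LY, sw_PD]

lemma sw_nXY (d : W →ₗ[ℂ] W) (q : TP W) : sw (nXY d q) = nXY d (sw q) := by
  have h1 : ∀ r : TP W, nXY d r = -(LX r) - LY r - PD d r := fun _ => rfl
  rw [h1, h1, map_sub, map_sub, map_neg, sw_LX, sw_LY, sw_PD]; abel

lemma sw_LL (q : TP W) : sw ((LX+LY : TP W →ₗ[ℂ] TP W) q) = (LX+LY : TP W →ₗ[ℂ] TP W) (sw q) := by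
  simp only [LinearMap.add_apply, map_add, sw_LX, sw_LY]; abel

lemma sw_evA (A A' : TP W →ₗ[ℂ] TP W) (h : ∀ q, sw (A q) = A' (sw q)) (p : OP W) :
    sw (evA A p) = evA A' p := by
  induction p using Finsupp.induction_linear with
  | zero => simp
  | add a b ha hb => simp [map_add, ha, hb]
  | single k w =>
    simp only [evA_single]
    rw [(powc A' A sw (fun x => (h x).symm) k _).symm]
    simp [Prod.swap]

lemma sw_XT (F : U →ₗ[ℂ] TP W) (P : TP U) : sw (XT F P) = XT (sw ∘ₗ F) (sw P) := by
  induction P using Finsupp.induction_linear with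
  | zero => simp
  | add a b ha hb => simp [map_add, ha, hb]
  | single p u =>
    simp only [XT_single, sw_single, LinearMap.comp_apply]
    rw [(powc LY LX sw (fun x => (sw_LX x).symm) p.1 _).symm,
        (powc LX LY sw (fun x => (sw_LY x).symm) p.2 _).symm]
    exact LYpow_LXpow _ _ _

lemma sw_exL (n : U →ₗ[ℂ] V →ₗ[ℂ] OP W) (A A' : TP W →ₗ[ℂ] TP W)
    (h : ∀ q, sw (A q) = A' (sw q)) (p : TP U) (v : V) :
    sw (exL n A p v) = exL n A' (sw p) v := by
  rw [exL_def, sw_XT, exL_def]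
  have h2 : sw ∘ₗ (evA A ∘ₗ n.flip v) = evA A' ∘ₗ n.flip v := by
    apply LinearMap.ext; intro u
    exact sw_evA A A' h (n u v)
  rw [h2]

lemma sw_exR (n : U →ₗ[ℂ] V →ₗ[ℂ] OP W) (A A' : TP W →ₗ[ℂ] TP W)
    (h : ∀ q, sw (A q) = A' (sw q)) (u : U) (p : TP V) :
    sw (exR n A u p) = exR n A' u (sw p) := by
  rw [exR_def, sw_XT, exR_def]
  have h2 : sw ∘ₗ (evA A ∘ₗ n u) = evA A' ∘ₗ n u := by
    apply LinearMap.ext; intro v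
    exact sw_evA A A' h (n u v)
  rw [h2]

lemma sw_ev2 (n : U →ₗ[ℂ] V →ₗ[ℂ] OP W) (A A' : TP W →ₗ[ℂ] TP W)
    (h : ∀ q, sw (A q) = A' (sw q)) (u : U) (v : V) :
    sw (ev2 n A u v) = ev2 n A' u v :=
  sw_evA A A' h (n u v)

-- instances for simp-style rewriting
lemma sw_ev2_LX (n : U →ₗ[ℂ] V →ₗ[ℂ] OP W) (u v) : sw (ev2 n LX u v) = ev2 n LY u v :=
  sw_ev2 n _ _ sw_LX u v
lemma sw_ev2_LY (n : U →ₗ[ℂ] V →ₗ[ℂ] OP W) (u v) : sw (ev2 n LY u v) = ev2 n LX u v :=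
  sw_ev2 n _ _ sw_LY u v
lemma sw_ev2_nX (n : U →ₗ[ℂ] V →ₗ[ℂ] OP W) (d) (u v) :
    sw (ev2 n (nX d) u v) = ev2 n (nY d) u v := sw_ev2 n _ _ (sw_nX d) u v
lemma sw_ev2_nY (n : U →ₗ[ℂ] V →ₗ[ℂ] OP W) (d) (u v) :
    sw (ev2 n (nY d) u v) = ev2 n (nX d) u v := sw_ev2 n _ _ (sw_nY d) u v
lemma sw_ev2_nXY (n : U →ₗ[ℂ] V →ₗ[ℂ] OP W) (d) (u v) :
    sw (ev2 n (nXY d) u v) = ev2 n (nXY d) u v := sw_ev2 n _ _ (sw_nXY d) u v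
lemma sw_exL_LL (n : U →ₗ[ℂ] V →ₗ[ℂ] OP W) (p v) :
    sw (exL n (LX+LY) p v) = exL n (LX+LY) (sw p) v := sw_exL n _ _ sw_LL p v
lemma sw_exL_nX (n : U →ₗ[ℂ] V →ₗ[ℂ] OP W) (d) (p v) :
    sw (exL n (nX d) p v) = exL n (nY d) (sw p) v := sw_exL n _ _ (sw_nX d) p v
lemma sw_exL_nY (n : U →ₗ[ℂ] V →ₗ[ℂ] OP W) (d) (p v) :
    sw (exL n (nY d) p v) = exL n (nX d) (sw p) v := sw_exL n _ _ (sw_nY d) p v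
lemma sw_exR_LX (n : U →ₗ[ℂ] V →ₗ[ℂ] OP W) (u p) :
    sw (exR n LX u p) = exR n LY u (sw p) := sw_exR n _ _ sw_LX u p
lemma sw_exR_LY (n : U →ₗ[ℂ] V →ₗ[ℂ] OP W) (u p) :
    sw (exR n LY u p) = exR n LX u (sw p) := sw_exR n _ _ sw_LY u p
lemma sw_exR_nX (n : U →ₗ[ℂ] V →ₗ[ℂ] OP W) (d) (u p) :
    sw (exR n (nX d) u p) = exR n (nY d) u (sw p) := sw_exR n _ _ (sw_nX d) u p
lemma sw_exR_nY (n : U →ₗ[ℂ] V →ₗ[ℂ] OP W) (d) (u p) :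
    sw (exR n (nY d) u p) = exR n (nX d) u (sw p) := sw_exR n _ _ (sw_nY d) u p
lemma sw_exR_nXY (n : U →ₗ[ℂ] V →ₗ[ℂ] OP W) (d) (u p) :
    sw (exR n (nXY d) u p) = exR n (nXY d) u (sw p) := sw_exR n _ _ (sw_nXY d) u p

end Swap

section Prod

variable {R Q : Type*} [AddCommGroup R] [Module ℂ R] [AddCommGroup Q] [Module ℂ Q]

def tL : TP R →ₗ[ℂ] TP (R×Q) := Finsupp.mapRange.linearMap (LinearMap.inl ℂ R Q)
def tR : TP Q →ₗ[ℂ] TP (R×Q) := Finsupp.mapRange.linearMap (LinearMap.inr ℂ R Q)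
def prR : TP (R×Q) →ₗ[ℂ] TP R := Finsupp.mapRange.linearMap (LinearMap.fst ℂ R Q)
def prQ : TP (R×Q) →ₗ[ℂ] TP Q := Finsupp.mapRange.linearMap (LinearMap.snd ℂ R Q)

@[simp] lemma tL_single (p : ℕ×ℕ) (a : R) : (tL (single p a) : TP (R×Q)) = single p (a, (0:Q)) := by
  simp [tL]

@[simp] lemma tR_single (p : ℕ×ℕ) (x : Q) : (tR (single p x) : TP (R×Q)) = single p ((0:R), x) := by
  simp [tR]

@[simp] lemma prR_single (p : ℕ×ℕ) (e : R×Q) : prR (single p e) = single p e.1 := by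
  simp [prR]

@[simp] lemma prQ_single (p : ℕ×ℕ) (e : R×Q) : prQ (single p e) = single p e.2 := by
  simp [prQ]

@[simp] lemma inlP_single (k : ℕ) (a : R) : inlP R Q (single k a) = single k (a, (0:Q)) := by
  simp [inlP]

@[simp] lemma inrP_single (k : ℕ) (x : Q) : inrP R Q (single k x) = single k ((0:R), x) := by
  simp [inrP]

lemma prR_tL (P : TP R) : prR (tL P : TP (R×Q)) = P := by
  induction P using Finsupp.induction_linear with
  | zero => simp
  | add a b ha hb => simp [map_add, ha, hb]
  | single p a => simp

lemma prR_tR (P : TP Q) : prR (tR P : TP (R×Q)) = 0 := by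
  induction P using Finsupp.induction_linear with
  | zero => simp
  | add a b ha hb => simp [map_add, ha, hb]
  | single p a => simp

lemma prQ_tL (P : TP R) : prQ (tL P : TP (R×Q)) = 0 := by
  induction P using Finsupp.induction_linear with
  | zero => simp
  | add a b ha hb => simp [map_add, ha, hb]
  | single p a => simp

lemma prQ_tR (P : TP Q) : prQ (tR P : TP (R×Q)) = P := by
  induction P using Finsupp.induction_linear with
  | zero => simp
  | add a b ha hb => simp [map_add, ha, hb]
  | single p a => simp

lemma prR_apply (P : TP (R×Q)) (ij : ℕ×ℕ) : prR P ij = (P ij).1 := by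
  simp [prR, Finsupp.mapRange.linearMap]
  rfl

lemma prQ_apply (P : TP (R×Q)) (ij : ℕ×ℕ) : prQ P ij = (P ij).2 := by
  simp [prQ, Finsupp.mapRange.linearMap]
  rfl

lemma TP_eq_iff (P P' : TP (R×Q)) : P = P' ↔ (prR P = prR P' ∧ prQ P = prQ P') := by
  constructor
  · rintro rfl; exact ⟨rfl, rfl⟩
  · rintro ⟨h1, h2⟩
    ext ij
    · rw [← prR_apply, ← prR_apply, h1]
    · rw [← prQ_apply, ← prQ_apply, h2]

-- commutation of operators with tL, tR
lemma LX_tL (q : TP R) : LX (tL q : TP (R×Q)) = tL (LX q) := by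
  induction q using Finsupp.induction_linear with
  | zero => simp
  | add a b ha hb => simp [map_add, ha, hb]
  | single p a => simp

lemma LY_tL (q : TP R) : LY (tL q : TP (R×Q)) = tL (LY q) := by
  induction q using Finsupp.induction_linear with
  | zero => simp
  | add a b ha hb => simp [map_add, ha, hb]
  | single p a => simp

lemma LX_tR (q : TP Q) : LX (tR q : TP (R×Q)) = tR (LX q) := by
  induction q using Finsupp.induction_linear with
  | zero => simp
  | add a b ha hb => simp [map_add, ha, hb]
  | single p a => simp

lemma LY_tR (q : TP Q) : LY (tR q : TP (R×Q)) = tR (LY q) := by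
  induction q using Finsupp.induction_linear with
  | zero => simp
  | add a b ha hb => simp [map_add, ha, hb]
  | single p a => simp

variable (dR : R →ₗ[ℂ] R) (dQ : Q →ₗ[ℂ] Q)

lemma PD_tL (q : TP R) : PD (dR.prodMap dQ) (tL q : TP (R×Q)) = tL (PD dR q) := by
  induction q using Finsupp.induction_linear with
  | zero => simp
  | add a b ha hb => simp [map_add, ha, hb]
  | single p a => simp

lemma PD_tR (q : TP Q) : PD (dR.prodMap dQ) (tR q : TP (R×Q)) = tR (PD dQ q) := by
  induction q using Finsupp.induction_linear with
  | zero => simp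
  | add a b ha hb => simp [map_add, ha, hb]
  | single p a => simp

lemma LL_tL (q : TP R) :
    (LX+LY : TP (R×Q) →ₗ[ℂ] TP (R×Q)) (tL q) = tL ((LX+LY : TP R →ₗ[ℂ] TP R) q) := by
  simp only [LinearMap.add_apply, map_add, LX_tL, LY_tL]

lemma LL_tR (q : TP Q) :
    (LX+LY : TP (R×Q) →ₗ[ℂ] TP (R×Q)) (tR q) = tR ((LX+LY : TP Q →ₗ[ℂ] TP Q) q) := by
  simp only [LinearMap.add_apply, map_add, LX_tR, LY_tR]

lemma nX_tL (q : TP R) : nX (dR.prodMap dQ) (tL q : TP (R×Q)) = tL (nX dR q) := by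
    rw [nX_def, nX_def, map_sub, map_neg, LX_tL, PD_tL]

lemma nY_tL (q : TP R) : nY (dR.prodMap dQ) (tL q : TP (R×Q)) = tL (nY dR q) := by
    rw [nY_def, nY_def, map_sub, map_neg, LY_tL, PD_tL]

lemma nXY_tL (q : TP R) : nXY (dR.prodMap dQ) (tL q : TP (R×Q)) = tL (nXY dR q) := by
    rw [nXY_def, nXY_def, map_sub, map_sub, map_neg, LX_tL, LY_tL, PD_tL]

lemma nX_tR (q : TP Q) : nX (dR.prodMap dQ) (tR q : TP (R×Q)) = tR (nX dQ q) := by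
    rw [nX_def, nX_def, map_sub, map_neg, LX_tR, PD_tR]

lemma nY_tR (q : TP Q) : nY (dR.prodMap dQ) (tR q : TP (R×Q)) = tR (nY dQ q) := by
    rw [nY_def, nY_def, map_sub, map_neg, LY_tR, PD_tR]

lemma nXY_tR (q : TP Q) : nXY (dR.prodMap dQ) (tR q : TP (R×Q)) = tR (nXY dQ q) := by
    rw [nXY_def, nXY_def, map_sub, map_sub, map_neg, LX_tR, LY_tR, PD_tR]

-- evA through the embeddings
lemma evA_inl (A : TP (R×Q) →ₗ[ℂ] TP (R×Q)) (B : TP R →ₗ[ℂ] TP R)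
    (h : ∀ q, A (tL q) = tL (B q)) (p : OP R) :
    evA A (inlP R Q p) = tL (evA B p) := by
  induction p using Finsupp.induction_linear with
  | zero => simp
  | add a b ha hb => simp [map_add, ha, hb]
  | single k w =>
    rw [inlP_single, evA_single, evA_single]
    have h1 : (single ((0:ℕ),(0:ℕ)) (w, (0:Q)) : TP (R×Q)) = tL (single (0,0) w) := by simp
    rw [h1]
    exact powc A B tL h k _

lemma evA_inr (A : TP (R×Q) →ₗ[ℂ] TP (R×Q)) (B : TP Q →ₗ[ℂ] TP Q)
    (h : ∀ q, A (tR q) = tR (B q)) (p : OP Q) :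
    evA A (inrP R Q p) = tR (evA B p) := by
  induction p using Finsupp.induction_linear with
  | zero => simp
  | add a b ha hb => simp [map_add, ha, hb]
  | single k w =>
    rw [inrP_single, evA_single, evA_single]
    have h1 : (single ((0:ℕ),(0:ℕ)) ((0:R), w) : TP (R×Q)) = tR (single (0,0) w) := by simp
    rw [h1]
    exact powc A B tR h k _

-- powers through embeddings
lemma tL_powX (i : ℕ) (q : TP R) : (LX^i) (tL q : TP (R×Q)) = tL ((LX^i) q) :=
  powc (LX : TP (R×Q) →ₗ[ℂ] TP (R×Q)) (LX : TP R →ₗ[ℂ] TP R) tL LX_tL i q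
lemma tL_powY (i : ℕ) (q : TP R) : (LY^i) (tL q : TP (R×Q)) = tL ((LY^i) q) :=
  powc (LY : TP (R×Q) →ₗ[ℂ] TP (R×Q)) (LY : TP R →ₗ[ℂ] TP R) tL LY_tL i q
lemma tR_powX (i : ℕ) (q : TP Q) : (LX^i) (tR q : TP (R×Q)) = tR ((LX^i) q) :=
  powc (LX : TP (R×Q) →ₗ[ℂ] TP (R×Q)) (LX : TP Q →ₗ[ℂ] TP Q) tR LX_tR i q
lemma tR_powY (i : ℕ) (q : TP Q) : (LY^i) (tR q : TP (R×Q)) = tR ((LY^i) q) :=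
  powc (LY : TP (R×Q) →ₗ[ℂ] TP (R×Q)) (LY : TP Q →ₗ[ℂ] TP Q) tR LY_tR i q

/-- transport data for an operator on `TP (R×Q)`. -/
structure Trans (A : TP (R×Q) →ₗ[ℂ] TP (R×Q)) (Ar : TP R →ₗ[ℂ] TP R) (Aq : TP Q →ₗ[ℂ] TP Q)
    (Ar' : TP R →ₗ[ℂ] TP R) (Aq' : TP Q →ₗ[ℂ] TP Q) : Prop where
  hl : ∀ q, A (tL q) = tL (Ar q)
  hr : ∀ q, A (tR q) = tR (Aq q)
  hR : ∀ p, evA Ar (evA1 (nD dR) p) = evA Ar' p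
  hQ : ∀ p, evA Aq (evA1 (nD dQ) p) = evA Aq' p

lemma evA1nD_LX {W : Type*} [AddCommGroup W] [Module ℂ W] (d : W →ₗ[ℂ] W) (p : OP W) :
    evA LX (evA1 (nD d) p) = evA (nX d) p :=
  evA_evA1 LX (nD d) (nX d) (evA_nD LX (nX d) d (LX_PD d) (fun _ => rfl)) p

lemma evA1nD_LY {W : Type*} [AddCommGroup W] [Module ℂ W] (d : W →ₗ[ℂ] W) (p : OP W) :
    evA LY (evA1 (nD d) p) = evA (nY d) p :=
  evA_evA1 LY (nD d) (nY d) (evA_nD LY (nY d) d (LY_PD d) (fun _ => rfl)) p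

lemma evA1nD_LL {W : Type*} [AddCommGroup W] [Module ℂ W] (d : W →ₗ[ℂ] W) (p : OP W) :
    evA (LX+LY) (evA1 (nD d) p) = evA (nXY d) p := by
  refine evA_evA1 (LX+LY) (nD d) (nXY d) ?_ p
  refine evA_nD (LX+LY) (nXY d) d ?_ ?_
  · intro q; simp only [LinearMap.add_apply, map_add, LX_PD, LY_PD]
  · intro q
    have h1 : nXY d q = -(LX q) - LY q - PD d q := rfl
    rw [h1]
    simp only [LinearMap.add_apply]
    abel

lemma transLX : Trans dR dQ LX LX LX (nX dR) (nX dQ) where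
  hl := LX_tL
  hr := LX_tR
  hR := evA1nD_LX dR
  hQ := evA1nD_LX dQ

lemma transLY : Trans dR dQ LY LY LY (nY dR) (nY dQ) where
  hl := LY_tL
  hr := LY_tR
  hR := evA1nD_LY dR
  hQ := evA1nD_LY dQ

lemma transLL : Trans dR dQ (LX+LY) (LX+LY) (LX+LY) (nXY dR) (nXY dQ) where
  hl := LL_tL
  hr := LL_tR
  hR := evA1nD_LL dR
  hQ := evA1nD_LL dQ

end Prod

section ConvWrap

variable {U V W U' V' : Type*}
variable [AddCommGroup U] [Module ℂ U] [AddCommGroup V] [Module ℂ V]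
variable [AddCommGroup W] [Module ℂ W] [AddCommGroup U'] [Module ℂ U'] [AddCommGroup V'] [Module ℂ V']

lemma eq_iff_of_sub_eq_sub {α : Type*} [AddCommGroup α] {a b c d : α} (h : a - b = c - d) :
    (a = b) ↔ (c = d) := by
  constructor
  · intro e
    rw [← sub_eq_zero, ← h, sub_eq_zero]
    exact e
  · intro e
    rw [← sub_eq_zero, h, sub_eq_zero]
    exact e

lemma convX' (n : U →ₗ[ℂ] V →ₗ[ℂ] OP W) (dU : U →ₗ[ℂ] U)
    (hd : ∀ u v, n (dU u) v = -lsh (n u v)) (n₂ : U' →ₗ[ℂ] V' →ₗ[ℂ] OP U) (u' : U') (v' : V')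
    (v : V) :
    exL n (LX+LY) (ev2 n₂ (nY dU) u' v') v = exL n (LX+LY) (ev2 n₂ LX u' v') v :=
  convX n dU hd (n₂ u' v') v

lemma convY' (n : U →ₗ[ℂ] V →ₗ[ℂ] OP W) (dU : U →ₗ[ℂ] U)
    (hd : ∀ u v, n (dU u) v = -lsh (n u v)) (n₂ : U' →ₗ[ℂ] V' →ₗ[ℂ] OP U) (u' : U') (v' : V')
    (v : V) :
    exL n (LX+LY) (ev2 n₂ (nX dU) u' v') v = exL n (LX+LY) (ev2 n₂ LY u' v') v :=
  convY n dU hd (n₂ u' v') v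

end ConvWrap

section Uprod

variable {R Q : Type*} [AddCommGroup R] [Module ℂ R] [AddCommGroup Q] [Module ℂ Q]
variable (dR : R →ₗ[ℂ] R) (dQ : Q →ₗ[ℂ] Q) (Ω : ExtDatum dR dQ) (m : R →ₗ[ℂ] R →ₗ[ℂ] OP R)

lemma up_RQ (a : R) (y : Q) :
    uprod dR dQ Ω m (a, (0:Q)) ((0:R), y)
      = inlP R Q (evA1 (nD dR) (Ω.psi y a)) + inrP R Q (Ω.l a y) := by
  rw [uprod_apply]; simp

lemma up_QR (x : Q) (b : R) :
    uprod dR dQ Ω m ((0:R), x) (b, (0:Q))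
      = inlP R Q (Ω.phi x b) + inrP R Q (evA1 (nD dQ) (Ω.r b x)) := by
  rw [uprod_apply]; simp

lemma up_QQ (hg : Ω.g = 0) (x y : Q) :
    uprod dR dQ Ω m ((0:R), x) ((0:R), y) = inrP R Q (Ω.o x y) := by
  rw [uprod_apply]; simp [hg]

variable {A : TP (R×Q) →ₗ[ℂ] TP (R×Q)} {Ar Ar' : TP R →ₗ[ℂ] TP R} {Aq Aq' : TP Q →ₗ[ℂ] TP Q}

lemma ev2M_RR (T : Trans dR dQ A Ar Aq Ar' Aq') (a b : R) :
    ev2 (uprod dR dQ Ω m) A (a,(0:Q)) (b,(0:Q)) = tL (ev2 m Ar a b) := by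
  rw [ev2_def, uprod_res, evA_inl A Ar T.hl]
  rfl

lemma ev2M_RQ (T : Trans dR dQ A Ar Aq Ar' Aq') (a : R) (y : Q) :
    ev2 (uprod dR dQ Ω m) A (a,(0:Q)) ((0:R),y)
      = tL (ev2 Ω.psi Ar' y a) + tR (ev2 Ω.l Aq a y) := by
  rw [ev2_def, up_RQ, map_add, evA_inl A Ar T.hl, evA_inr A Aq T.hr, T.hR]
  rfl

lemma ev2M_QR (T : Trans dR dQ A Ar Aq Ar' Aq') (x : Q) (b : R) :
    ev2 (uprod dR dQ Ω m) A ((0:R),x) (b,(0:Q))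
      = tL (ev2 Ω.phi Ar x b) + tR (ev2 Ω.r Aq' b x) := by
  rw [ev2_def, up_QR, map_add, evA_inl A Ar T.hl, evA_inr A Aq T.hr, T.hQ]
  rfl

lemma ev2M_QQ (hg : Ω.g = 0) (T : Trans dR dQ A Ar Aq Ar' Aq') (x y : Q) :
    ev2 (uprod dR dQ Ω m) A ((0:R),x) ((0:R),y) = tR (ev2 Ω.o Aq x y) := by
  rw [ev2_def, up_QQ _ _ _ _ hg, evA_inr A Aq T.hr]
  rfl

lemma exLM_ll (S : TP R) (b : R) :
    exL (uprod dR dQ Ω m) (LX+LY) (tL S) (b,(0:Q)) = tL (exL m (LX+LY) S b) := by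
  induction S using Finsupp.induction_linear with
  | zero => simp only [map_zero, exL_def, exR_def, add_zero, zero_add]
  | add u v hu hv => simp only [map_add, exL_addp, exR_addp, hu, hv]; try abel
  | single p u =>
    rw [tL_single, exL_single, exL_single, uprod_res, evA_inl _ _ (LL_tL), tL_powY, tL_powX]

lemma exLM_lq (S : TP R) (z : Q) :
    exL (uprod dR dQ Ω m) (LX+LY) (tL S) ((0:R),z)
      = tL (exR Ω.psi (nXY dR) z S) + tR (exL Ω.l (LX+LY) S z) := by
  induction S using Finsupp.induction_linear with
  | zero => simp only [map_zero, exL_def, exR_def, add_zero, zero_add]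
  | add u v hu hv => simp only [map_add, exL_addp, exR_addp, hu, hv]; try abel
  | single p u =>
    rw [tL_single, exL_single, up_RQ, map_add, evA_inl _ _ (LL_tL), evA_inr _ _ (LL_tR),
      evA1nD_LL, exR_single, exL_single, map_add, map_add, tL_powY, tL_powX, tR_powY, tR_powX]

lemma exLM_rl (S : TP Q) (b : R) :
    exL (uprod dR dQ Ω m) (LX+LY) (tR S) (b,(0:Q))
      = tL (exL Ω.phi (LX+LY) S b) + tR (exR Ω.r (nXY dQ) b S) := by
  induction S using Finsupp.induction_linear with
  | zero => simp only [map_zero, exL_def, exR_def, add_zero, zero_add]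
  | add u v hu hv => simp only [map_add, exL_addp, exR_addp, hu, hv]; try abel
  | single p u =>
    rw [tR_single, exL_single, up_QR, map_add, evA_inl _ _ (LL_tL), evA_inr _ _ (LL_tR),
      evA1nD_LL, exR_single, exL_single, map_add, map_add, tL_powY, tL_powX, tR_powY, tR_powX]

lemma exLM_rq (hg : Ω.g = 0) (S : TP Q) (z : Q) :
    exL (uprod dR dQ Ω m) (LX+LY) (tR S) ((0:R),z) = tR (exL Ω.o (LX+LY) S z) := by
  induction S using Finsupp.induction_linear with
  | zero => simp only [map_zero, exL_def, exR_def, add_zero, zero_add]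
  | add u v hu hv => simp only [map_add, exL_addp, exR_addp, hu, hv]; try abel
  | single p u =>
    rw [tR_single, exL_single, up_QQ _ _ _ _ hg, evA_inr _ _ (LL_tR), exL_single,
      tR_powY, tR_powX]

lemma exRM_Rl (T : Trans dR dQ A Ar Aq Ar' Aq') (a : R) (S : TP R) :
    exR (uprod dR dQ Ω m) A (a,(0:Q)) (tL S) = tL (exR m Ar a S) := by
  induction S using Finsupp.induction_linear with
  | zero => simp only [map_zero, exL_def, exR_def, add_zero, zero_add]
  | add u v hu hv => simp only [map_add, exL_addp, exR_addp, hu, hv]; try abel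
  | single p u =>
    rw [tL_single, exR_single, exR_single, uprod_res, evA_inl A Ar T.hl, tL_powY, tL_powX]

lemma exRM_Rq (T : Trans dR dQ A Ar Aq Ar' Aq') (a : R) (S : TP Q) :
    exR (uprod dR dQ Ω m) A (a,(0:Q)) (tR S)
      = tL (exL Ω.psi Ar' S a) + tR (exR Ω.l Aq a S) := by
  induction S using Finsupp.induction_linear with
  | zero => simp only [map_zero, exL_def, exR_def, add_zero, zero_add]
  | add u v hu hv => simp only [map_add, exL_addp, exR_addp, hu, hv]; try abel
  | single p u =>
    rw [tR_single, exR_single, up_RQ, map_add, evA_inl A Ar T.hl, evA_inr A Aq T.hr,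
      T.hR, exL_single, exR_single, map_add, map_add, tL_powY, tL_powX, tR_powY, tR_powX]

lemma exRM_Ql (T : Trans dR dQ A Ar Aq Ar' Aq') (x : Q) (S : TP R) :
    exR (uprod dR dQ Ω m) A ((0:R),x) (tL S)
      = tL (exR Ω.phi Ar x S) + tR (exL Ω.r Aq' S x) := by
  induction S using Finsupp.induction_linear with
  | zero => simp only [map_zero, exL_def, exR_def, add_zero, zero_add]
  | add u v hu hv => simp only [map_add, exL_addp, exR_addp, hu, hv]; try abel
  | single p u =>
    rw [tL_single, exR_single, up_QR, map_add, evA_inl A Ar T.hl, evA_inr A Aq T.hr,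
      T.hQ, exR_single, exL_single, map_add, map_add, tL_powY, tL_powX, tR_powY, tR_powX]

lemma exRM_Qq (hg : Ω.g = 0) (T : Trans dR dQ A Ar Aq Ar' Aq') (x : Q) (S : TP Q) :
    exR (uprod dR dQ Ω m) A ((0:R),x) (tR S) = tR (exR Ω.o Aq x S) := by
  induction S using Finsupp.induction_linear with
  | zero => simp only [map_zero, exL_def, exR_def, add_zero, zero_add]
  | add u v hu hv => simp only [map_add, exL_addp, exR_addp, hu, hv]; try abel
  | single p u =>
    rw [tR_single, exR_single, up_QQ _ _ _ _ hg, evA_inr A Aq T.hr, exR_single,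
      tR_powY, tR_powX]

end Uprod


section Cases

variable {R Q : Type*} [AddCommGroup R] [Module ℂ R] [AddCommGroup Q] [Module ℂ Q]
variable (dR : R →ₗ[ℂ] R) (dQ : Q →ₗ[ℂ] Q) (Ω : ExtDatum dR dQ) (m : R →ₗ[ℂ] R →ₗ[ℂ] OP R)

local notation "MM" => uprod dR dQ Ω m

lemma caseRRR (hm : IsLSCA dR m) (a b c : R) :
    exL MM (LX+LY) (ev2 MM LX (a,(0:Q)) (b,(0:Q))) (c,(0:Q))
      - exR MM LX (a,(0:Q)) (ev2 MM LY (b,(0:Q)) (c,(0:Q)))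
    = exL MM (LX+LY) (ev2 MM LY (b,(0:Q)) (a,(0:Q))) (c,(0:Q))
      - exR MM LY (b,(0:Q)) (ev2 MM LX (a,(0:Q)) (c,(0:Q))) := by
  simp only [ev2M_RR _ _ _ _ (transLX dR dQ), ev2M_RR _ _ _ _ (transLY dR dQ), exLM_ll,
    exRM_Rl _ _ _ _ (transLX dR dQ), exRM_Rl _ _ _ _ (transLY dR dQ)]
  rw [← map_sub, ← map_sub]
  exact congrArg _ (hm.lsym a b c)

lemma caseRRQ_iff (a b : R) (z : Q) :
    (exL MM (LX+LY) (ev2 MM LX (a,(0:Q)) (b,(0:Q))) ((0:R),z)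
       - exR MM LX (a,(0:Q)) (ev2 MM LY (b,(0:Q)) ((0:R),z))
     = exL MM (LX+LY) (ev2 MM LY (b,(0:Q)) (a,(0:Q))) ((0:R),z)
       - exR MM LY (b,(0:Q)) (ev2 MM LX (a,(0:Q)) ((0:R),z)))
    ↔ ((exR Ω.psi (nXY dR) z (ev2 m LX a b - ev2 m LY b a)
          = exR m LX a (ev2 Ω.psi (nY dR) z b) - exR m LY b (ev2 Ω.psi (nX dR) z a)
            + exL Ω.psi (nX dR) (ev2 Ω.l LY b z) a - exL Ω.psi (nY dR) (ev2 Ω.l LX a z) b)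
       ∧ (exL Ω.l (LX + LY) (ev2 m LX a b) z - exR Ω.l LX a (ev2 Ω.l LY b z)
          = exL Ω.l (LX + LY) (ev2 m LY b a) z - exR Ω.l LY b (ev2 Ω.l LX a z))) := by
  simp only [ev2M_RR _ _ _ _ (transLX dR dQ), ev2M_RR _ _ _ _ (transLY dR dQ),
    ev2M_RQ _ _ _ _ (transLX dR dQ), ev2M_RQ _ _ _ _ (transLY dR dQ),
    exLM_lq, exR_addp, exRM_Rl _ _ _ _ (transLX dR dQ), exRM_Rl _ _ _ _ (transLY dR dQ),
    exRM_Rq _ _ _ _ (transLX dR dQ), exRM_Rq _ _ _ _ (transLY dR dQ), exR_subp]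
  rw [TP_eq_iff]
  simp only [map_sub, map_add, prR_tL, prR_tR, prQ_tL, prQ_tR, add_zero, zero_add, sub_zero,
    zero_sub, map_zero]
  exact and_congr (eq_iff_of_sub_eq_sub (by abel)) (eq_iff_of_sub_eq_sub (by abel))

lemma caseQRR_iff (hmc : ∀ u v, m (dR u) v = -lsh (m u v)) (a c : R) (x : Q) :
    (exL MM (LX+LY) (ev2 MM LX ((0:R),x) (a,(0:Q))) (c,(0:Q))
       - exR MM LX ((0:R),x) (ev2 MM LY (a,(0:Q)) (c,(0:Q)))
     = exL MM (LX+LY) (ev2 MM LY (a,(0:Q)) ((0:R),x)) (c,(0:Q))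
       - exR MM LY (a,(0:Q)) (ev2 MM LX ((0:R),x) (c,(0:Q))))
    ↔ ((exL m (LX + LY) (ev2 Ω.phi LX x a - ev2 Ω.psi LX x a) c
            + exL Ω.phi (LX + LY) (ev2 Ω.r LY a x - ev2 Ω.l LY a x) c
          = exR Ω.phi LX x (ev2 m LY a c) - exR m LY a (ev2 Ω.phi LX x c)
            - exL Ω.psi (nY dR) (ev2 Ω.r (nX dQ) c x) a)
       ∧ (exR Ω.r (nXY dQ) c (ev2 Ω.r (nX dQ) a x) - exL Ω.r (nX dQ) (ev2 m LY a c) x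
          = exR Ω.r (nXY dQ) c (ev2 Ω.l LY a x) - exR Ω.l LY a (ev2 Ω.r (nX dQ) c x))) := by
  simp only [ev2M_QR _ _ _ _ (transLX dR dQ), ev2M_RR _ _ _ _ (transLY dR dQ),
    ev2M_RQ _ _ _ _ (transLY dR dQ), ev2M_QR _ _ _ _ (transLX dR dQ),
    exL_addp, exLM_ll, exLM_rl, exR_addp,
    exRM_Ql _ _ _ _ (transLX dR dQ), exRM_Rl _ _ _ _ (transLY dR dQ),
    exRM_Rq _ _ _ _ (transLY dR dQ), exL_subp]
  rw [TP_eq_iff]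
  simp only [map_sub, map_add, prR_tL, prR_tR, prQ_tL, prQ_tR, add_zero, zero_add, sub_zero,
    zero_sub, map_zero]
  rw [convX' m dR hmc Ω.psi x a c, convY' Ω.phi dQ Ω.hphi.dleft Ω.r a x c]
  exact and_congr (eq_iff_of_sub_eq_sub (by abel)) (eq_iff_of_sub_eq_sub (by abel))

lemma caseRQQ_iff (hg : Ω.g = 0) (a : R) (x y : Q) :
    (exL MM (LX+LY) (ev2 MM LX (a,(0:Q)) ((0:R),x)) ((0:R),y)
       - exR MM LX (a,(0:Q)) (ev2 MM LY ((0:R),x) ((0:R),y))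
     = exL MM (LX+LY) (ev2 MM LY ((0:R),x) (a,(0:Q))) ((0:R),y)
       - exR MM LY ((0:R),x) (ev2 MM LX (a,(0:Q)) ((0:R),y)))
    ↔ ((exR Ω.psi (nXY dR) y (ev2 Ω.psi (nX dR) x a) - exL Ω.psi (nX dR) (ev2 Ω.o LY x y) a
          = exR Ω.psi (nXY dR) y (ev2 Ω.phi LY x a) - exR Ω.phi LY x (ev2 Ω.psi (nX dR) y a))
       ∧ (exL Ω.o (LX + LY) (ev2 Ω.l LX a x) y
            + exL Ω.l (LX + LY) (ev2 Ω.psi (nX dR) x a) y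
            - exR Ω.l LX a (ev2 Ω.o LY x y)
          = exL Ω.l (LX + LY) (ev2 Ω.phi LY x a) y
            + exL Ω.o (LX + LY) (ev2 Ω.r (nY dQ) a x) y
            - exL Ω.r (nY dQ) (ev2 Ω.psi (nX dR) y a) x
            - exR Ω.o LY x (ev2 Ω.l LX a y))) := by
  simp only [ev2M_RQ _ _ _ _ (transLX dR dQ), ev2M_QQ _ _ _ _ hg (transLY dR dQ),
    ev2M_QR _ _ _ _ (transLY dR dQ),
    exL_addp, exLM_lq, exLM_rq _ _ _ _ hg, exR_addp,
    exRM_Rq _ _ _ _ (transLX dR dQ), exRM_Ql _ _ _ _ (transLY dR dQ),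
    exRM_Qq _ _ _ _ hg (transLY dR dQ)]
  rw [TP_eq_iff]
  simp only [map_sub, map_add, prR_tL, prR_tR, prQ_tL, prQ_tR, add_zero, zero_add, sub_zero,
    zero_sub, map_zero]
  exact and_congr (eq_iff_of_sub_eq_sub (by abel)) (eq_iff_of_sub_eq_sub (by abel))

lemma caseQQR_iff (hg : Ω.g = 0) (c : R) (x y : Q) :
    (exL MM (LX+LY) (ev2 MM LX ((0:R),x) ((0:R),y)) (c,(0:Q))
       - exR MM LX ((0:R),x) (ev2 MM LY ((0:R),y) (c,(0:Q)))
     = exL MM (LX+LY) (ev2 MM LY ((0:R),y) ((0:R),x)) (c,(0:Q))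
       - exR MM LY ((0:R),y) (ev2 MM LX ((0:R),x) (c,(0:Q))))
    ↔ ((exL Ω.phi (LX + LY) (ev2 Ω.o LX x y) c - exR Ω.phi LX x (ev2 Ω.phi LY y c)
          = exL Ω.phi (LX + LY) (ev2 Ω.o LY y x) c - exR Ω.phi LY y (ev2 Ω.phi LX x c))
       ∧ (exR Ω.r (nXY dQ) c (ev2 Ω.o LX x y - ev2 Ω.o LY y x)
          = exL Ω.r (nX dQ) (ev2 Ω.phi LY y c) x - exL Ω.r (nY dQ) (ev2 Ω.phi LX x c) y
            + exR Ω.o LX x (ev2 Ω.r (nY dQ) c y) - exR Ω.o LY y (ev2 Ω.r (nX dQ) c x))) := by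
  simp only [ev2M_QQ _ _ _ _ hg (transLX dR dQ), ev2M_QQ _ _ _ _ hg (transLY dR dQ),
    ev2M_QR _ _ _ _ (transLX dR dQ), ev2M_QR _ _ _ _ (transLY dR dQ),
    exLM_rl, exR_addp,
    exRM_Ql _ _ _ _ (transLX dR dQ), exRM_Ql _ _ _ _ (transLY dR dQ),
    exRM_Qq _ _ _ _ hg (transLX dR dQ), exRM_Qq _ _ _ _ hg (transLY dR dQ), exR_subp]
  rw [TP_eq_iff]
  simp only [map_sub, map_add, prR_tL, prR_tR, prQ_tL, prQ_tR, add_zero, zero_add, sub_zero,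
    zero_sub, map_zero]
  exact and_congr (eq_iff_of_sub_eq_sub (by abel)) (eq_iff_of_sub_eq_sub (by abel))

lemma caseQQQ_iff (hg : Ω.g = 0) (x y z : Q) :
    (exL MM (LX+LY) (ev2 MM LX ((0:R),x) ((0:R),y)) ((0:R),z)
       - exR MM LX ((0:R),x) (ev2 MM LY ((0:R),y) ((0:R),z))
     = exL MM (LX+LY) (ev2 MM LY ((0:R),y) ((0:R),x)) ((0:R),z)
       - exR MM LY ((0:R),y) (ev2 MM LX ((0:R),x) ((0:R),z)))
    ↔ (exL Ω.o (LX + LY) (ev2 Ω.o LX x y) z - exR Ω.o LX x (ev2 Ω.o LY y z)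
        = exL Ω.o (LX + LY) (ev2 Ω.o LY y x) z - exR Ω.o LY y (ev2 Ω.o LX x z)) := by
  simp only [ev2M_QQ _ _ _ _ hg (transLX dR dQ), ev2M_QQ _ _ _ _ hg (transLY dR dQ),
    exLM_rq _ _ _ _ hg, exRM_Qq _ _ _ _ hg (transLX dR dQ), exRM_Qq _ _ _ _ hg (transLY dR dQ)]
  rw [TP_eq_iff]
  simp only [map_sub, map_add, prR_tL, prR_tR, prQ_tL, prQ_tR, add_zero, zero_add, sub_zero,
    zero_sub, map_zero, sub_self, eq_self_iff_true, true_and]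

end Cases


section Conf

variable {R Q : Type*} [AddCommGroup R] [Module ℂ R] [AddCommGroup Q] [Module ℂ Q]
variable (dR : R →ₗ[ℂ] R) (dQ : Q →ₗ[ℂ] Q) (Ω : ExtDatum dR dQ) (m : R →ₗ[ℂ] R →ₗ[ℂ] OP R)

lemma lsh_inlP (p : OP R) : lsh (inlP R Q p) = inlP R Q (lsh p) := by
  induction p using Finsupp.induction_linear with
  | zero => simp
  | add a b ha hb => simp [map_add, ha, hb]
  | single k w => simp

lemma lsh_inrP (p : OP Q) : lsh (inrP R Q p) = inrP R Q (lsh p) := by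
  induction p using Finsupp.induction_linear with
  | zero => simp
  | add a b ha hb => simp [map_add, ha, hb]
  | single k w => simp

lemma pD_inlP (p : OP R) : pD (dR.prodMap dQ) (inlP R Q p) = inlP R Q (pD dR p) := by
  induction p using Finsupp.induction_linear with
  | zero => simp
  | add a b ha hb => simp [map_add, ha, hb]
  | single k w => simp

lemma pD_inrP (p : OP Q) : pD (dR.prodMap dQ) (inrP R Q p) = inrP R Q (pD dQ p) := by
  induction p using Finsupp.induction_linear with
  | zero => simp
  | add a b ha hb => simp [map_add, ha, hb]
  | single k w => simp

lemma uprod_conf (hmc : ConfBilin dR dR dR m) :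
    ConfBilin (dR.prodMap dQ) (dR.prodMap dQ) (dR.prodMap dQ) (uprod dR dQ Ω m) := by
  constructor
  · intro e₁ e₂
    rw [uprod_apply, uprod_apply]
    have h1 : (dR.prodMap dQ) e₁ = (dR e₁.1, dQ e₁.2) := rfl
    rw [h1]
    simp only [hmc.dleft, Ω.hphi.dleft, Ω.hg.dleft, Ω.ho.dleft, Ω.hl.dleft,
      Ω.hpsi.dright, Ω.hr.dright, evA1_nD_dright]
    simp only [map_add, map_neg, lsh_inlP, lsh_inrP]
    abel
  · intro e₁ e₂
    rw [uprod_apply, uprod_apply]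
    have h1 : (dR.prodMap dQ) e₂ = (dR e₂.1, dQ e₂.2) := rfl
    rw [h1]
    simp only [hmc.dright, Ω.hphi.dright, Ω.hg.dright, Ω.ho.dright, Ω.hl.dright,
      Ω.hpsi.dleft, Ω.hr.dleft, evA1_nD_dleft]
    simp only [map_add, lsh_inlP, lsh_inrP, pD_inlP, pD_inrP]
    abel

end Conf


end BP

/-- **Bicrossed products (Section 5.2).**  Let `Ω(R,Q) = (φ, ψ, l, r, ∘)` be an extending
datum with `g` trivial.  Then `Ω(R,Q)` is a left-symmetric conformal extending structure of
`R` by `Q` iff `(Q, ∘_λ)` is a left-symmetric conformal algebra, `R` is a `Q`-bimodule via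
`(φ, ψ)`, `Q` is an `R`-bimodule via `(l, r)`, and the conditions (i)–(iv) hold. -/
theorem bicrossed_product_iff
    {R Q : Type*} [AddCommGroup R] [Module ℂ R] [AddCommGroup Q] [Module ℂ Q]
    (dR : R →ₗ[ℂ] R) (dQ : Q →ₗ[ℂ] Q)
    (m : R →ₗ[ℂ] R →ₗ[ℂ] OP R) (hm : IsLSCA dR m)
    (Ω : ExtDatum dR dQ) (hg : Ω.g = 0) :
    IsLSCA (dR.prodMap dQ) (uprod dR dQ Ω m) ↔
      (IsLSCA dQ Ω.o ∧
      IsBimodule dR Ω.o Ω.phi Ω.psi ∧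
      IsBimodule dQ m Ω.l Ω.r ∧
      -- (i) = (LC1)
      (∀ (a b : R) (x : Q),
        exL m (LX + LY) (ev2 Ω.phi LX x a - ev2 Ω.psi LX x a) b
            + exL Ω.phi (LX + LY) (ev2 Ω.r LY a x - ev2 Ω.l LY a x) b
          = exR Ω.phi LX x (ev2 m LY a b) - exR m LY a (ev2 Ω.phi LX x b)
            - exL Ω.psi (nY dR) (ev2 Ω.r (nX dQ) b x) a) ∧
      -- (ii) = (LC3)
      (∀ (a b : R) (x : Q),
        exR Ω.psi (nXY dR) x (ev2 m LX a b - ev2 m LY b a)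
          = exR m LX a (ev2 Ω.psi (nY dR) x b) - exR m LY b (ev2 Ω.psi (nX dR) x a)
            + exL Ω.psi (nX dR) (ev2 Ω.l LY b x) a - exL Ω.psi (nY dR) (ev2 Ω.l LX a x) b) ∧
      -- (iii) = (LC6)
      (∀ (a : R) (x y : Q),
        exL Ω.o (LX + LY) (ev2 Ω.l LX a x) y
            + exL Ω.l (LX + LY) (ev2 Ω.psi (nX dR) x a) y
            - exR Ω.l LX a (ev2 Ω.o LY x y)
          = exL Ω.l (LX + LY) (ev2 Ω.phi LY x a) y
            + exL Ω.o (LX + LY) (ev2 Ω.r (nY dQ) a x) y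
            - exL Ω.r (nY dQ) (ev2 Ω.psi (nX dR) y a) x
            - exR Ω.o LY x (ev2 Ω.l LX a y)) ∧
      -- (iv) = (LC8)
      (∀ (a : R) (x y : Q),
        exR Ω.r (nXY dQ) a (ev2 Ω.o LX x y - ev2 Ω.o LY y x)
          = exL Ω.r (nX dQ) (ev2 Ω.phi LY y a) x - exL Ω.r (nY dQ) (ev2 Ω.phi LX x a) y
            + exR Ω.o LX x (ev2 Ω.r (nY dQ) a y) - exR Ω.o LY y (ev2 Ω.r (nX dQ) a x))) := by
  constructor
  · intro H
    refine ⟨⟨Ω.ho, fun x y z => (BP.caseQQQ_iff dR dQ Ω m hg x y z).mp (H.lsym _ _ _)⟩,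
      ⟨fun x y c => ((BP.caseQQR_iff dR dQ Ω m hg c x y).mp (H.lsym _ _ _)).1, ?_⟩,
      ⟨fun a b z => ((BP.caseRRQ_iff dR dQ Ω m a b z).mp (H.lsym _ _ _)).2, ?_⟩,
      fun a b x => ((BP.caseQRR_iff dR dQ Ω m hm.conf.dleft a b x).mp (H.lsym _ _ _)).1,
      fun a b x => ((BP.caseRRQ_iff dR dQ Ω m a b x).mp (H.lsym _ _ _)).1,
      fun a x y => ((BP.caseRQQ_iff dR dQ Ω m hg a x y).mp (H.lsym _ _ _)).2,
      fun a x y => ((BP.caseQQR_iff dR dQ Ω m hg a x y).mp (H.lsym _ _ _)).2⟩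
    · -- bm2 for (R, o, phi, psi)
      intro x y v
      have h := congrArg BP.sw (((BP.caseRQQ_iff dR dQ Ω m hg v x y).mp (H.lsym _ _ _)).1)
      simp only [map_sub, BP.sw_exR_nXY, BP.sw_ev2_nX, BP.sw_exL_nX, BP.sw_ev2_LY,
        BP.sw_exR_LY] at h
      exact h.symm
    · -- bm2 for (Q, m, l, r)
      intro a b v
      have h := congrArg BP.sw (((BP.caseQRR_iff dR dQ Ω m hm.conf.dleft a b v).mp
        (H.lsym _ _ _)).2)
      simp only [map_sub, BP.sw_exR_nXY, BP.sw_ev2_nX, BP.sw_exL_nX, BP.sw_ev2_LY,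
        BP.sw_exR_LY] at h
      exact h.symm
  · rintro ⟨hQ, hBR, hBQ, h1, h2, h3, h4⟩
    refine ⟨BP.uprod_conf dR dQ Ω m hm.conf, ?_⟩
    have sbm2Q : ∀ (a c : R) (x : Q),
        exR Ω.r (nXY dQ) c (ev2 Ω.r (nX dQ) a x) - exL Ω.r (nX dQ) (ev2 m LY a c) x
          = exR Ω.r (nXY dQ) c (ev2 Ω.l LY a x) - exR Ω.l LY a (ev2 Ω.r (nX dQ) c x) := by
      intro a c x
      have h := congrArg BP.sw (hBQ.bm2 a c x)
      simp only [map_sub, BP.sw_exR_nXY, BP.sw_ev2_LX, BP.sw_exR_LX, BP.sw_ev2_nY,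
        BP.sw_exL_nY] at h
      exact h.symm
    have sbm2R : ∀ (x y : Q) (a : R),
        exR Ω.psi (nXY dR) y (ev2 Ω.psi (nX dR) x a) - exL Ω.psi (nX dR) (ev2 Ω.o LY x y) a
          = exR Ω.psi (nXY dR) y (ev2 Ω.phi LY x a) - exR Ω.phi LY x (ev2 Ω.psi (nX dR) y a) := by
      intro x y a
      have h := congrArg BP.sw (hBR.bm2 x y a)
      simp only [map_sub, BP.sw_exR_nXY, BP.sw_ev2_LX, BP.sw_exR_LX, BP.sw_ev2_nY,
        BP.sw_exL_nY] at h
      exact h.symm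
    intro e₁ e₂ e₃
    obtain ⟨a1, x1⟩ := e₁
    obtain ⟨a2, x2⟩ := e₂
    obtain ⟨a3, x3⟩ := e₃
    have C1 := BP.caseRRR dR dQ Ω m hm a1 a2 a3
    have C2 := (BP.caseRRQ_iff dR dQ Ω m a1 a2 x3).mpr ⟨h2 a1 a2 x3, hBQ.bm1 a1 a2 x3⟩
    have C3 := (BP.caseQRR_iff dR dQ Ω m hm.conf.dleft a2 a3 x1).mpr
      ⟨h1 a2 a3 x1, sbm2Q a2 a3 x1⟩
    have C4 : (exL (uprod dR dQ Ω m) (LX + LY) (ev2 (uprod dR dQ Ω m) LX (a1,(0:Q)) ((0:R),x2)) (a3,(0:Q)) - exR (uprod dR dQ Ω m) LX (a1,(0:Q)) (ev2 (uprod dR dQ Ω m) LY ((0:R),x2) (a3,(0:Q)))) = (exL (uprod dR dQ Ω m) (LX + LY) (ev2 (uprod dR dQ Ω m) LY ((0:R),x2) (a1,(0:Q))) (a3,(0:Q)) - exR (uprod dR dQ Ω m) LY ((0:R),x2) (ev2 (uprod dR dQ Ω m) LX (a1,(0:Q)) (a3,(0:Q)))) := by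
      have C3' := (BP.caseQRR_iff dR dQ Ω m hm.conf.dleft a1 a3 x2).mpr
        ⟨h1 a1 a3 x2, sbm2Q a1 a3 x2⟩
      have h := congrArg BP.sw C3'
      simp only [map_sub, BP.sw_exL_LL, BP.sw_exR_LX, BP.sw_exR_LY, BP.sw_ev2_LX,
        BP.sw_ev2_LY] at h
      exact h.symm
    have C5 := (BP.caseRQQ_iff dR dQ Ω m hg a1 x2 x3).mpr ⟨sbm2R x2 x3 a1, h3 a1 x2 x3⟩
    have C6 : (exL (uprod dR dQ Ω m) (LX + LY) (ev2 (uprod dR dQ Ω m) LX ((0:R),x1) (a2,(0:Q))) ((0:R),x3) - exR (uprod dR dQ Ω m) LX ((0:R),x1) (ev2 (uprod dR dQ Ω m) LY (a2,(0:Q)) ((0:R),x3))) = (exL (uprod dR dQ Ω m) (LX + LY) (ev2 (uprod dR dQ Ω m) LY (a2,(0:Q)) ((0:R),x1)) ((0:R),x3) - exR (uprod dR dQ Ω m) LY (a2,(0:Q)) (ev2 (uprod dR dQ Ω m) LX ((0:R),x1) ((0:R),x3))) := by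
      have C5' := (BP.caseRQQ_iff dR dQ Ω m hg a2 x1 x3).mpr ⟨sbm2R x1 x3 a2, h3 a2 x1 x3⟩
      have h := congrArg BP.sw C5'
      simp only [map_sub, BP.sw_exL_LL, BP.sw_exR_LX, BP.sw_exR_LY, BP.sw_ev2_LX,
        BP.sw_ev2_LY] at h
      exact h.symm
    have C7 := (BP.caseQQR_iff dR dQ Ω m hg a3 x1 x2).mpr ⟨hBR.bm1 x1 x2 a3, h4 a3 x1 x2⟩
    have C8 := (BP.caseQQQ_iff dR dQ Ω m hg x1 x2 x3).mpr (hQ.lsym x1 x2 x3)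
    have d1 : ((a1, x1) : R × Q) = (a1,(0:Q)) + ((0:R),x1) := by simp
    have d2 : ((a2, x2) : R × Q) = (a2,(0:Q)) + ((0:R),x2) := by simp
    have d3 : ((a3, x3) : R × Q) = (a3,(0:Q)) + ((0:R),x3) := by simp
    rw [d1, d2, d3]
    simp only [BP.ev2_addl, BP.ev2_addr, BP.exL_addp, BP.exL_addv, BP.exR_addu, BP.exR_addp]
    have key : ((exL (uprod dR dQ Ω m) (LX + LY) (ev2 (uprod dR dQ Ω m) LX (a1,(0:Q)) (a2,(0:Q))) (a3,(0:Q)) - exR (uprod dR dQ Ω m) LX (a1,(0:Q)) (ev2 (uprod dR dQ Ω m) LY (a2,(0:Q)) (a3,(0:Q))))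
        + (exL (uprod dR dQ Ω m) (LX + LY) (ev2 (uprod dR dQ Ω m) LX (a1,(0:Q)) (a2,(0:Q))) ((0:R),x3) - exR (uprod dR dQ Ω m) LX (a1,(0:Q)) (ev2 (uprod dR dQ Ω m) LY (a2,(0:Q)) ((0:R),x3)))
        + (exL (uprod dR dQ Ω m) (LX + LY) (ev2 (uprod dR dQ Ω m) LX ((0:R),x1) (a2,(0:Q))) (a3,(0:Q)) - exR (uprod dR dQ Ω m) LX ((0:R),x1) (ev2 (uprod dR dQ Ω m) LY (a2,(0:Q)) (a3,(0:Q))))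
        + (exL (uprod dR dQ Ω m) (LX + LY) (ev2 (uprod dR dQ Ω m) LX (a1,(0:Q)) ((0:R),x2)) (a3,(0:Q)) - exR (uprod dR dQ Ω m) LX (a1,(0:Q)) (ev2 (uprod dR dQ Ω m) LY ((0:R),x2) (a3,(0:Q))))
        + (exL (uprod dR dQ Ω m) (LX + LY) (ev2 (uprod dR dQ Ω m) LX (a1,(0:Q)) ((0:R),x2)) ((0:R),x3) - exR (uprod dR dQ Ω m) LX (a1,(0:Q)) (ev2 (uprod dR dQ Ω m) LY ((0:R),x2) ((0:R),x3)))
        + (exL (uprod dR dQ Ω m) (LX + LY) (ev2 (uprod dR dQ Ω m) LX ((0:R),x1) (a2,(0:Q))) ((0:R),x3) - exR (uprod dR dQ Ω m) LX ((0:R),x1) (ev2 (uprod dR dQ Ω m) LY (a2,(0:Q)) ((0:R),x3)))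
        + (exL (uprod dR dQ Ω m) (LX + LY) (ev2 (uprod dR dQ Ω m) LX ((0:R),x1) ((0:R),x2)) (a3,(0:Q)) - exR (uprod dR dQ Ω m) LX ((0:R),x1) (ev2 (uprod dR dQ Ω m) LY ((0:R),x2) (a3,(0:Q))))
        + (exL (uprod dR dQ Ω m) (LX + LY) (ev2 (uprod dR dQ Ω m) LX ((0:R),x1) ((0:R),x2)) ((0:R),x3) - exR (uprod dR dQ Ω m) LX ((0:R),x1) (ev2 (uprod dR dQ Ω m) LY ((0:R),x2) ((0:R),x3))))
        = ((exL (uprod dR dQ Ω m) (LX + LY) (ev2 (uprod dR dQ Ω m) LY (a2,(0:Q)) (a1,(0:Q))) (a3,(0:Q)) - exR (uprod dR dQ Ω m) LY (a2,(0:Q)) (ev2 (uprod dR dQ Ω m) LX (a1,(0:Q)) (a3,(0:Q))))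
        + (exL (uprod dR dQ Ω m) (LX + LY) (ev2 (uprod dR dQ Ω m) LY (a2,(0:Q)) (a1,(0:Q))) ((0:R),x3) - exR (uprod dR dQ Ω m) LY (a2,(0:Q)) (ev2 (uprod dR dQ Ω m) LX (a1,(0:Q)) ((0:R),x3)))
        + (exL (uprod dR dQ Ω m) (LX + LY) (ev2 (uprod dR dQ Ω m) LY (a2,(0:Q)) ((0:R),x1)) (a3,(0:Q)) - exR (uprod dR dQ Ω m) LY (a2,(0:Q)) (ev2 (uprod dR dQ Ω m) LX ((0:R),x1) (a3,(0:Q))))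
        + (exL (uprod dR dQ Ω m) (LX + LY) (ev2 (uprod dR dQ Ω m) LY ((0:R),x2) (a1,(0:Q))) (a3,(0:Q)) - exR (uprod dR dQ Ω m) LY ((0:R),x2) (ev2 (uprod dR dQ Ω m) LX (a1,(0:Q)) (a3,(0:Q))))
        + (exL (uprod dR dQ Ω m) (LX + LY) (ev2 (uprod dR dQ Ω m) LY ((0:R),x2) (a1,(0:Q))) ((0:R),x3) - exR (uprod dR dQ Ω m) LY ((0:R),x2) (ev2 (uprod dR dQ Ω m) LX (a1,(0:Q)) ((0:R),x3)))
        + (exL (uprod dR dQ Ω m) (LX + LY) (ev2 (uprod dR dQ Ω m) LY (a2,(0:Q)) ((0:R),x1)) ((0:R),x3) - exR (uprod dR dQ Ω m) LY (a2,(0:Q)) (ev2 (uprod dR dQ Ω m) LX ((0:R),x1) ((0:R),x3)))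
        + (exL (uprod dR dQ Ω m) (LX + LY) (ev2 (uprod dR dQ Ω m) LY ((0:R),x2) ((0:R),x1)) (a3,(0:Q)) - exR (uprod dR dQ Ω m) LY ((0:R),x2) (ev2 (uprod dR dQ Ω m) LX ((0:R),x1) (a3,(0:Q))))
        + (exL (uprod dR dQ Ω m) (LX + LY) (ev2 (uprod dR dQ Ω m) LY ((0:R),x2) ((0:R),x1)) ((0:R),x3) - exR (uprod dR dQ Ω m) LY ((0:R),x2) (ev2 (uprod dR dQ Ω m) LX ((0:R),x1) ((0:R),x3)))) := by
      rw [C1, C2, C3, C4, C5, C6, C7, C8]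
    rw [← sub_eq_zero] at key ⊢
    rw [← key]
    abel
end
end

section
/- Let R and Q be two left-symmetric conformal algebras and E = R ⊕ Q the direct sum of ℂ[∂]-modules. Suppose E carries a left-symmetric conformal algebra structure such that R and Q are both subalgebras of E (the restrictions of the λ-product of E to R and to Q coincide with the λ-products of R and Q respectively). Then there exists a left-symmetric conformal extending structure Ω(R,Q) = (φ, ψ, l, r, ∘_λ) of R by Q with g_λ(·,·) trivial and ∘_λ equal to the λ-product of Q, and an isomorphism of left-symmetric conformal algebras from E to the bicrossed product R⋈^{φ,ψ}_{l,r}Q which stabilizes R and co-stabilizes Q. -/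
open Finsupp Polynomial

noncomputable section

section Aux

variable {U W : Type*} [AddCommGroup U] [Module ℂ U] [AddCommGroup W] [Module ℂ W]

lemma lsh_single (k : ℕ) (w : W) : lsh (Finsupp.single k w) = Finsupp.single (k+1) w := by
  simp [lsh, Finsupp.mapDomain_single]

lemma pD_single (d : W →ₗ[ℂ] W) (k : ℕ) (w : W) :
    pD d (Finsupp.single k w) = Finsupp.single k (d w) := by
  simp [pD]

lemma evA1_single (A : OP W →ₗ[ℂ] OP W) (k : ℕ) (w : W) :
    evA1 A (Finsupp.single k w) = (A ^ k) (Finsupp.single 0 w) := by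
  simp [evA1]

lemma pD_lsh (d : W →ₗ[ℂ] W) (p : OP W) : pD d (lsh p) = lsh (pD d p) := by
  induction p using Finsupp.induction_linear with
  | zero => simp
  | add f g hf hg => simp [map_add, hf, hg]
  | single k w => rw [lsh_single, pD_single, pD_single, lsh_single]

lemma evA1_lsh (A : OP W →ₗ[ℂ] OP W) (p : OP W) : evA1 A (lsh p) = A (evA1 A p) := by
  induction p using Finsupp.induction_linear with
  | zero => simp
  | add f g hf hg => simp [map_add, hf, hg]
  | single k w =>
      rw [lsh_single, evA1_single, evA1_single, pow_succ', Module.End.mul_apply]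

lemma evA1_pD (d : W →ₗ[ℂ] W) (A : OP W →ₗ[ℂ] OP W)
    (hc : ∀ q, A (pD d q) = pD d (A q)) (p : OP W) :
    evA1 A (pD d p) = pD d (evA1 A p) := by
  induction p using Finsupp.induction_linear with
  | zero => simp
  | add f g hf hg => simp [map_add, hf, hg]
  | single k w =>
      rw [pD_single, evA1_single, evA1_single]
      induction k with
      | zero => simp [pD_single]
      | succ n ih =>
          simp only [pow_succ', Module.End.mul_apply]
          rw [ih, hc]

lemma nD_pD_comm (d : W →ₗ[ℂ] W) (q : OP W) : nD d (pD d q) = pD d (nD d q) := by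
  simp only [nD, LinearMap.sub_apply, LinearMap.neg_apply, map_sub, map_neg, pD_lsh]

lemma evA1_nD_lsh (d : W →ₗ[ℂ] W) (q : OP W) :
    evA1 (nD d) (nD d q) = lsh (evA1 (nD d) q) := by
  have h1 : nD d q = -lsh q - pD d q := by simp [nD]
  rw [h1, map_sub, map_neg, evA1_lsh, evA1_pD d _ (nD_pD_comm d)]
  simp [nD]

lemma lsh_pow_single (k : ℕ) (w : W) :
    (lsh ^ k) (Finsupp.single 0 w) = Finsupp.single k w := by
  induction k with
  | zero => simp
  | succ n ih => rw [pow_succ', Module.End.mul_apply, ih, lsh_single]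

lemma evA1_nD_invol (d : W →ₗ[ℂ] W) (p : OP W) :
    evA1 (nD d) (evA1 (nD d) p) = p := by
  induction p using Finsupp.induction_linear with
  | zero => simp
  | add f g hf hg => simp [map_add, hf, hg]
  | single k w =>
      rw [evA1_single]
      have : ∀ n : ℕ, evA1 (nD d) (((nD d) ^ n) (Finsupp.single 0 w))
          = (lsh ^ n) (evA1 (nD d) (Finsupp.single 0 w)) := by
        intro n
        induction n with
        | zero => simp
        | succ n ih =>
            simp only [pow_succ', Module.End.mul_apply]
            rw [evA1_nD_lsh, ih]
      rw [this k, evA1_single, pow_zero, Module.End.one_apply, lsh_pow_single]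

lemma pMap_single (f : U →ₗ[ℂ] W) (k : ℕ) (u : U) :
    pMap f (Finsupp.single k u) = Finsupp.single k (f u) := by
  simp [pMap]

lemma pMap_lsh (f : U →ₗ[ℂ] W) (p : OP U) : pMap f (lsh p) = lsh (pMap f p) := by
  induction p using Finsupp.induction_linear with
  | zero => simp
  | add a b ha hb => simp [map_add, ha, hb]
  | single k u => rw [lsh_single, pMap_single, pMap_single, lsh_single]

lemma pMap_pD (f : U →ₗ[ℂ] W) (d : U →ₗ[ℂ] U) (d' : W →ₗ[ℂ] W)
    (h : ∀ u, f (d u) = d' (f u)) (p : OP U) :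
    pMap f (pD d p) = pD d' (pMap f p) := by
  induction p using Finsupp.induction_linear with
  | zero => simp
  | add a b ha hb => simp [map_add, ha, hb]
  | single k u => rw [pD_single, pMap_single, pMap_single, pD_single, h]

end Aux

section Aux2

variable {R Q : Type*} [AddCommGroup R] [Module ℂ R] [AddCommGroup Q] [Module ℂ Q]

lemma inlP_single (k : ℕ) (a : R) :
    inlP R Q (Finsupp.single k a) = Finsupp.single k ((a, 0) : R × Q) := by
  simp [inlP]

lemma inrP_single (k : ℕ) (x : Q) :
    inrP R Q (Finsupp.single k x) = Finsupp.single k ((0, x) : R × Q) := by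
  simp [inrP]

lemma pMap_fst_inlP (p : OP R) : pMap (LinearMap.fst ℂ R Q) (inlP R Q p) = p := by
  induction p using Finsupp.induction_linear with
  | zero => simp
  | add a b ha hb => simp [map_add, ha, hb]
  | single k a => rw [inlP_single, pMap_single]; simp

lemma pMap_snd_inlP (p : OP R) : pMap (LinearMap.snd ℂ R Q) (inlP R Q p) = 0 := by
  induction p using Finsupp.induction_linear with
  | zero => simp
  | add a b ha hb => simp [map_add, ha, hb]
  | single k a => rw [inlP_single, pMap_single]; simp

lemma pMap_fst_inrP (p : OP Q) : pMap (LinearMap.fst ℂ R Q) (inrP R Q p) = 0 := by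
  induction p using Finsupp.induction_linear with
  | zero => simp
  | add a b ha hb => simp [map_add, ha, hb]
  | single k a => rw [inrP_single, pMap_single]; simp

lemma pMap_snd_inrP (p : OP Q) : pMap (LinearMap.snd ℂ R Q) (inrP R Q p) = p := by
  induction p using Finsupp.induction_linear with
  | zero => simp
  | add a b ha hb => simp [map_add, ha, hb]
  | single k a => rw [inrP_single, pMap_single]; simp

lemma split_OP (p : OP (R × Q)) :
    inlP R Q (pMap (LinearMap.fst ℂ R Q) p) + inrP R Q (pMap (LinearMap.snd ℂ R Q) p) = p := by
  induction p using Finsupp.induction_linear with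
  | zero => simp
  | add a b ha hb =>
      simp only [map_add]
      rw [show inlP R Q (pMap (LinearMap.fst ℂ R Q) a) + inlP R Q (pMap (LinearMap.fst ℂ R Q) b)
          + (inrP R Q (pMap (LinearMap.snd ℂ R Q) a) + inrP R Q (pMap (LinearMap.snd ℂ R Q) b))
          = (inlP R Q (pMap (LinearMap.fst ℂ R Q) a) + inrP R Q (pMap (LinearMap.snd ℂ R Q) a))
          + (inlP R Q (pMap (LinearMap.fst ℂ R Q) b) + inrP R Q (pMap (LinearMap.snd ℂ R Q) b))
          from by abel, ha, hb]
  | single k e =>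
      rw [pMap_single, pMap_single, inlP_single, inrP_single, ← Finsupp.single_add]
      congr 1
      ext <;> simp

lemma pMap_id (p : OP R) : pMap (LinearMap.id : R →ₗ[ℂ] R) p = p := by
  induction p using Finsupp.induction_linear with
  | zero => simp
  | add a b ha hb => simp [map_add, ha, hb]
  | single k a => rw [pMap_single]; rfl

end Aux2


/-- **Proposition 5.4.**  Let `R` and `Q` be two left-symmetric conformal algebras, and
`E = R ⊕ Q` a left-symmetric conformal algebra containing both `R` and `Q` as subalgebras.
Then `E` is isomorphic to a bicrossed product `R ⋈^{φ,ψ}_{l,r} Q` (a unified product with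
`g` trivial and `∘` the λ-product of `Q`), by an isomorphism stabilizing `R` and
co-stabilizing `Q`. -/
theorem E_iso_bicrossed_product
    {R Q : Type*} [AddCommGroup R] [Module ℂ R] [AddCommGroup Q] [Module ℂ Q]
    (dR : R →ₗ[ℂ] R) (dQ : Q →ₗ[ℂ] Q)
    (m : R →ₗ[ℂ] R →ₗ[ℂ] OP R) (hm : IsLSCA dR m)
    (mQ : Q →ₗ[ℂ] Q →ₗ[ℂ] OP Q) (hmQ : IsLSCA dQ mQ)
    (mE : (R × Q) →ₗ[ℂ] (R × Q) →ₗ[ℂ] OP (R × Q))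
    (hE : IsLSCA (dR.prodMap dQ) mE)
    (hsubR : ∀ a b : R, mE (a, 0) (b, 0) = inlP R Q (m a b))
    (hsubQ : ∀ x y : Q, mE (0, x) (0, y) = inrP R Q (mQ x y)) :
    ∃ Ω : ExtDatum dR dQ, Ω.g = 0 ∧ Ω.o = mQ ∧
      IsLSCA (dR.prodMap dQ) (uprod dR dQ Ω m) ∧
      ∃ T : (R × Q) ≃ₗ[ℂ] (R × Q),
        IsIsoLSCA (dR.prodMap dQ) mE (uprod dR dQ Ω m) T ∧ Stab T ∧ Costab T := by
  classical
  set dE := dR.prodMap dQ with hdE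
  have hfstE : ∀ e : R × Q, (LinearMap.fst ℂ R Q) (dE e) = dR ((LinearMap.fst ℂ R Q) e) := by
    intro e; simp [hdE]
  have hsndE : ∀ e : R × Q, (LinearMap.snd ℂ R Q) (dE e) = dQ ((LinearMap.snd ℂ R Q) e) := by
    intro e; simp [hdE]
  set phi : Q →ₗ[ℂ] R →ₗ[ℂ] OP R :=
    (mE.compl₁₂ (LinearMap.inr ℂ R Q) (LinearMap.inl ℂ R Q)).compr₂
      (pMap (LinearMap.fst ℂ R Q)) with hphi_def
  set psi : Q →ₗ[ℂ] R →ₗ[ℂ] OP R :=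
    ((mE.compl₁₂ (LinearMap.inl ℂ R Q) (LinearMap.inr ℂ R Q)).compr₂
      (evA1 (nD dR) ∘ₗ pMap (LinearMap.fst ℂ R Q))).flip with hpsi_def
  set l : R →ₗ[ℂ] Q →ₗ[ℂ] OP Q :=
    (mE.compl₁₂ (LinearMap.inl ℂ R Q) (LinearMap.inr ℂ R Q)).compr₂
      (pMap (LinearMap.snd ℂ R Q)) with hl_def
  set r : R →ₗ[ℂ] Q →ₗ[ℂ] OP Q :=
    ((mE.compl₁₂ (LinearMap.inr ℂ R Q) (LinearMap.inl ℂ R Q)).compr₂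
      (evA1 (nD dQ) ∘ₗ pMap (LinearMap.snd ℂ R Q))).flip with hr_def
  have phi_apply : ∀ x b, phi x b = pMap (LinearMap.fst ℂ R Q) (mE (0, x) (b, 0)) := by
    intro x b
    simp [hphi_def, LinearMap.compr₂_apply, LinearMap.compl₁₂_apply]
  have psi_apply : ∀ y a, psi y a
      = evA1 (nD dR) (pMap (LinearMap.fst ℂ R Q) (mE (a, 0) (0, y))) := by
    intro y a
    simp [hpsi_def, LinearMap.compr₂_apply, LinearMap.compl₁₂_apply]
  have l_apply : ∀ a y, l a y = pMap (LinearMap.snd ℂ R Q) (mE (a, 0) (0, y)) := by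
    intro a y
    simp [hl_def, LinearMap.compr₂_apply, LinearMap.compl₁₂_apply]
  have r_apply : ∀ b x, r b x
      = evA1 (nD dQ) (pMap (LinearMap.snd ℂ R Q) (mE (0, x) (b, 0))) := by
    intro b x
    simp [hr_def, LinearMap.compr₂_apply, LinearMap.compl₁₂_apply]
  have hinl : ∀ a : R, ((dR a, 0) : R × Q) = dE (a, 0) := by intro a; simp [hdE]
  have hinr : ∀ x : Q, ((0, dQ x) : R × Q) = dE (0, x) := by intro x; simp [hdE]
  have hphi : ConfBilin dQ dR dR phi := by
    constructor
    · intro x b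
      rw [phi_apply, phi_apply, hinr, hE.conf.dleft, map_neg, pMap_lsh]
    · intro x b
      rw [phi_apply, phi_apply, hinl, hE.conf.dright, map_add, pMap_lsh,
        pMap_pD _ dE dR hfstE]
  have hpsi : ConfBilin dQ dR dR psi := by
    constructor
    · intro y a
      rw [psi_apply, psi_apply, hinr, hE.conf.dright, map_add, pMap_lsh,
        pMap_pD _ dE dR hfstE, map_add, evA1_lsh, evA1_pD dR _ (nD_pD_comm dR)]
      simp only [nD, LinearMap.sub_apply, LinearMap.neg_apply]
      abel
    · intro y a
      rw [psi_apply, psi_apply, hinl, hE.conf.dleft, map_neg, pMap_lsh, map_neg, evA1_lsh]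
      simp only [nD, LinearMap.sub_apply, LinearMap.neg_apply]
      abel
  have hl : ConfBilin dR dQ dQ l := by
    constructor
    · intro a y
      rw [l_apply, l_apply, hinl, hE.conf.dleft, map_neg, pMap_lsh]
    · intro a y
      rw [l_apply, l_apply, hinr, hE.conf.dright, map_add, pMap_lsh,
        pMap_pD _ dE dQ hsndE]
  have hr : ConfBilin dR dQ dQ r := by
    constructor
    · intro b x
      rw [r_apply, r_apply, hinl, hE.conf.dright, map_add, pMap_lsh,
        pMap_pD _ dE dQ hsndE, map_add, evA1_lsh, evA1_pD dQ _ (nD_pD_comm dQ)]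
      simp only [nD, LinearMap.sub_apply, LinearMap.neg_apply]
      abel
    · intro b x
      rw [r_apply, r_apply, hinr, hE.conf.dleft, map_neg, pMap_lsh, map_neg, evA1_lsh]
      simp only [nD, LinearMap.sub_apply, LinearMap.neg_apply]
      abel
  have hg : ConfBilin dQ dQ dR (0 : Q →ₗ[ℂ] Q →ₗ[ℂ] OP R) := by
    constructor <;> intro u v <;> simp
  have key : uprod dR dQ ⟨phi, psi, l, r, 0, mQ, hphi, hpsi, hl, hr, hg, hmQ.conf⟩ m = mE := by
    apply LinearMap.ext; intro e₁; apply LinearMap.ext; intro e₂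
    rw [uprod_apply]
    dsimp only
    rw [phi_apply, psi_apply, l_apply, r_apply, evA1_nD_invol, evA1_nD_invol]
    have he1 : e₁ = ((e₁.1, 0) : R × Q) + (0, e₁.2) := by ext <;> simp
    have he2 : e₂ = ((e₂.1, 0) : R × Q) + (0, e₂.2) := by ext <;> simp
    have h2 := split_OP (mE (e₁.1, 0) (0, e₂.2))
    have h3 := split_OP (mE (0, e₁.2) (e₂.1, 0))
    conv_rhs =>
      rw [he1, he2]
      simp only [map_add, LinearMap.add_apply]
      rw [hsubR, hsubQ, ← h2, ← h3]
    simp only [LinearMap.zero_apply, add_zero, map_add]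
    abel
  refine ⟨⟨phi, psi, l, r, 0, mQ, hphi, hpsi, hl, hr, hg, hmQ.conf⟩, rfl, rfl, ?_, ?_⟩
  · rw [key]; exact hE
  · refine ⟨LinearEquiv.refl ℂ (R × Q), ⟨fun e => rfl, fun u v => ?_⟩, fun a => rfl, fun e => rfl⟩
    rw [key]
    simp [pMap_id]
end
end
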